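/- arXiv:1810.09887 — 7 statements merged into one kernel-verified Lean document; each statement's English description precedes it below -/
import Mathlib

section
/- Let p be a 231-avoiding permutation of size N-1 and let 0 ≤ k ≤ N-1. Then there exists exactly one extension of p (insertion of the value N into one of the N possible positions) that is both 231-avoiding and k-winnable for N. -/
def IsLTRMax {N : ℕ} (p : Equiv.Perm (Fin N)) (j : Fin N) : Prop :=
  ∀ i : Fin N, i < j → p i < p j

def Winnable (N k : ℕ) (p : Equiv.Perm (Fin N)) : Prop :=
  ∃ j : Fin N, k ≤ (j : ℕ) ∧ IsLTRMax p j ∧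
    (∀ i : Fin N, k ≤ (i : ℕ) → IsLTRMax p i → j ≤ i) ∧ ((p j : ℕ) = N - 1)

/-- `p` avoids the pattern 231: there are no indices `i < j < l`
with `p l < p i < p j`. -/
def Avoids231 {N : ℕ} (p : Equiv.Perm (Fin N)) : Prop :=
  ¬ ∃ i j l : Fin N, i < j ∧ j < l ∧ p l < p i ∧ p i < p j

/-- `q` (of size `n+1`) is an extension of `p` (of size `n`): `q` is obtained by
inserting the new maximum value `n` at some position `t`; entries of `p` before
position `t` keep their positions, and the later ones are shifted right by one. -/
def IsExtension {n : ℕ} (p : Equiv.Perm (Fin n)) (q : Equiv.Perm (Fin (n + 1))) : Prop :=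
  ∃ t : Fin (n + 1), (q t : ℕ) = n ∧
    ∀ i : Fin n, (q (if (i : ℕ) < (t : ℕ) then i.castSucc else i.succ) : ℕ) = (p i : ℕ)

namespace WinnExtAux

variable {n : ℕ}

/-- The insertion function: insert value `n` at position `t`. -/
def extFun (p : Equiv.Perm (Fin n)) (t : ℕ) (ht : t ≤ n) : Fin (n + 1) → Fin (n + 1) :=
  fun s =>
    have hs : (s : ℕ) < n + 1 := s.isLt
    if h : (s : ℕ) < t then (p ⟨s, by omega⟩).castSucc
    else if h' : (s : ℕ) = t then Fin.last n
    else (p ⟨(s : ℕ) - 1, by omega⟩).castSucc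

lemma extFun_inj (p : Equiv.Perm (Fin n)) (t : ℕ) (ht : t ≤ n) :
    Function.Injective (extFun p t ht) := by
  intro a b hab
  have ha := a.isLt; have hb := b.isLt
  unfold extFun at hab
  simp only at hab
  split_ifs at hab <;>
    first
    | (exact absurd hab (Fin.castSucc_lt_last _).ne)
    | (exact absurd hab.symm (Fin.castSucc_lt_last _).ne)
    | (exact Fin.ext (by omega))
    | · have h1 := p.injective (Fin.castSucc_injective _ hab)
        have h2 := congrArg Fin.val h1
        simp only at h2
        exact Fin.ext (by omega)

/-- The extension permutation. -/
noncomputable def ext (p : Equiv.Perm (Fin n)) (t : ℕ) (ht : t ≤ n) : Equiv.Perm (Fin (n + 1)) :=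
  Equiv.ofBijective _
    ((Fintype.bijective_iff_injective_and_card _).2 ⟨extFun_inj p t ht, rfl⟩)

lemma ext_apply_lt (p : Equiv.Perm (Fin n)) (t : ℕ) (ht : t ≤ n) (s : Fin (n + 1))
    (h : (s : ℕ) < t) : ext p t ht s = (p ⟨s, by omega⟩).castSucc := by
  simp only [ext, Equiv.ofBijective_apply, extFun]
  rw [dif_pos h]

lemma ext_apply_eq (p : Equiv.Perm (Fin n)) (t : ℕ) (ht : t ≤ n) (s : Fin (n + 1))
    (h : (s : ℕ) = t) : ext p t ht s = Fin.last n := by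
  simp only [ext, Equiv.ofBijective_apply, extFun]
  rw [dif_neg (by omega), dif_pos h]

lemma ext_apply_gt (p : Equiv.Perm (Fin n)) (t : ℕ) (ht : t ≤ n) (s : Fin (n + 1))
    (h : t < (s : ℕ)) :
    ext p t ht s = (p ⟨(s : ℕ) - 1, by have := s.isLt; omega⟩).castSucc := by
  simp only [ext, Equiv.ofBijective_apply, extFun]
  rw [dif_neg (by omega), dif_neg (by omega)]

lemma ext_isExtension (p : Equiv.Perm (Fin n)) (t : ℕ) (ht : t ≤ n) :
    IsExtension p (ext p t ht) := by
  refine ⟨⟨t, by omega⟩, ?_, ?_⟩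
  · rw [ext_apply_eq p t ht _ rfl]; simp
  · intro i
    by_cases h : (i : ℕ) < t
    · rw [if_pos h, ext_apply_lt p t ht _ (by simpa using h)]
      simp
    · rw [if_neg h, ext_apply_gt p t ht _ (by simp; omega)]
      simp

/-- Any extension with insertion position `t` equals `ext p ↑t _`. -/
lemma ext_unique (p : Equiv.Perm (Fin n)) (q : Equiv.Perm (Fin (n + 1)))
    (t : Fin (n + 1)) (hqt : (q t : ℕ) = n)
    (hq : ∀ i : Fin n, (q (if (i : ℕ) < (t : ℕ) then i.castSucc else i.succ) : ℕ) = (p i : ℕ)) :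
    q = ext p t t.is_le := by
  apply Equiv.ext
  intro s
  rcases lt_trichotomy (s : ℕ) (t : ℕ) with h | h | h
  · set m : Fin n := ⟨s, by omega⟩ with hm
    have hpos : (if (m : ℕ) < (t : ℕ) then m.castSucc else m.succ) = s := by
      rw [if_pos (by simpa [hm] using h)]; exact Fin.ext rfl
    have := hq m
    rw [hpos] at this
    rw [ext_apply_lt p t t.is_le s h]
    exact Fin.ext (by simpa using this)
  · have hst : s = t := Fin.ext h
    rw [ext_apply_eq p t t.is_le s h, hst]
    exact Fin.ext (by simpa using hqt)
  · have hs := s.isLt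
    set m : Fin n := ⟨(s : ℕ) - 1, by omega⟩ with hm
    have hpos : (if (m : ℕ) < (t : ℕ) then m.castSucc else m.succ) = s := by
      rw [if_neg (by simp [hm]; omega)]; exact Fin.ext (by simp [hm]; omega)
    have := hq m
    rw [hpos] at this
    rw [ext_apply_gt p t t.is_le s h]
    exact Fin.ext (by simpa using this)

lemma ext_congr (p : Equiv.Perm (Fin n)) (t₁ t₂ : ℕ) (h₁ : t₁ ≤ n) (h₂ : t₂ ≤ n)
    (h : t₁ = t₂) : ext p t₁ h₁ = ext p t₂ h₂ := by subst h; rfl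

/-- `t` is a splitting point of `p`: everything before `t` is below everything from `t` on. -/
def Split (p : Equiv.Perm (Fin n)) (t : ℕ) : Prop :=
  ∀ i l : Fin n, (i : ℕ) < t → t ≤ (l : ℕ) → p i < p l

lemma split_n (p : Equiv.Perm (Fin n)) : Split p n :=
  fun _ l _ hl => absurd l.isLt (by omega)

/-- In a 231-avoiding permutation, every left-to-right maximum is a splitting point. -/
lemma split_of_ltrmax (p : Equiv.Perm (Fin n)) (hp : Avoids231 p) (i : Fin n)
    (h : IsLTRMax p i) : Split p (i : ℕ) := by
  intro a l ha hl
  rcases eq_or_lt_of_le hl with hl' | hl'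
  · have : l = i := Fin.ext hl'.symm
    subst this
    exact h a (by exact ha)
  · by_contra hcon
    have hne : p l ≠ p a := fun he => by
      have := p.injective he; omega
    have hlt : p l < p a := lt_of_le_of_ne (not_lt.mp hcon) hne
    exact hp ⟨a, i, l, ha, hl', hlt, h a ha⟩

/-- A splitting point `t < n` is a left-to-right maximum. -/
lemma ltrmax_of_split (p : Equiv.Perm (Fin n)) (t : ℕ) (ht : t < n)
    (hs : Split p t) : IsLTRMax p ⟨t, ht⟩ := by
  intro a ha
  exact hs a ⟨t, ht⟩ ha le_rfl

/-- Decompose a non-`t` position of the extension. -/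
lemma ext_decomp (p : Equiv.Perm (Fin n)) (t : ℕ) (ht : t ≤ n) (s : Fin (n + 1))
    (hs : (s : ℕ) ≠ t) :
    ∃ m : Fin n, ext p t ht s = (p m).castSucc ∧
      (((s : ℕ) < t ∧ (m : ℕ) = (s : ℕ)) ∨ (t < (s : ℕ) ∧ (m : ℕ) = (s : ℕ) - 1)) := by
  rcases lt_or_gt_of_ne hs with h | h
  · exact ⟨⟨s, by omega⟩, ext_apply_lt p t ht s h, Or.inl ⟨h, rfl⟩⟩
  · exact ⟨⟨(s : ℕ) - 1, by have := s.isLt; omega⟩, ext_apply_gt p t ht s h,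
      Or.inr ⟨h, rfl⟩⟩

/-- If `p` avoids 231 and `t` is a splitting point, the extension avoids 231. -/
lemma avoids_ext (p : Equiv.Perm (Fin n)) (hp : Avoids231 p) (t : ℕ) (ht : t ≤ n)
    (hs : Split p t) : Avoids231 (ext p t ht) := by
  rintro ⟨i, j, l, hij, hjl, h1, h2⟩
  set q := ext p t ht with hq
  have hi : (i : ℕ) ≠ t := by
    intro he
    have : q i = Fin.last n := ext_apply_eq p t ht i he
    have h3 : q i < q j := h2
    rw [this] at h3
    exact absurd h3 (not_lt.mpr (Fin.le_last _))
  have hl : (l : ℕ) ≠ t := by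
    intro he
    have : q l = Fin.last n := ext_apply_eq p t ht l he
    have h3 : q l < q i := h1
    rw [this] at h3
    exact absurd h3 (not_lt.mpr (Fin.le_last _))
  obtain ⟨mi, hmi, hmi'⟩ := ext_decomp p t ht i hi
  obtain ⟨ml, hml, hml'⟩ := ext_decomp p t ht l hl
  by_cases hj : (j : ℕ) = t
  · -- j is the position of the max; then i < t < l and Split is violated
    have hit : (i : ℕ) < t := by
      have : (i : ℕ) < (j : ℕ) := hij
      omega
    have hlt : t < (l : ℕ) := by
      have : (j : ℕ) < (l : ℕ) := hjl
      omega
    have hmi2 : (mi : ℕ) = (i : ℕ) := by rcases hmi' with ⟨_, h⟩ | ⟨h, _⟩ <;> omega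
    have hml2 : (ml : ℕ) = (l : ℕ) - 1 := by rcases hml' with ⟨h, _⟩ | ⟨_, h⟩ <;> omega
    have hsplit : p mi < p ml := hs mi ml (by omega) (by omega)
    have : q l < q i := h1
    rw [hmi, hml] at this
    have : p ml < p mi := by simpa using this
    omega
  · obtain ⟨mj, hmj, hmj'⟩ := ext_decomp p t ht j hj
    have hij' : (i : ℕ) < (j : ℕ) := hij
    have hjl' : (j : ℕ) < (l : ℕ) := hjl
    have h1' : p ml < p mi := by
      have := h1; rw [hmi, hml] at this; simpa using this
    have h2' : p mi < p mj := by
      have := h2; rw [hmi, hmj] at this; simpa using this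
    refine hp ⟨mi, mj, ml, ?_, ?_, h1', h2'⟩
    · show (mi : ℕ) < (mj : ℕ)
      rcases hmi' with ⟨c, e⟩ | ⟨c, e⟩ <;> rcases hmj' with ⟨c', e'⟩ | ⟨c', e'⟩ <;> omega
    · show (mj : ℕ) < (ml : ℕ)
      rcases hmj' with ⟨c, e⟩ | ⟨c, e⟩ <;> rcases hml' with ⟨c', e'⟩ | ⟨c', e'⟩ <;> omega

/-- If `k ≤ t` and there is no LTR-max of `p` in `[k, t)`, the extension is winnable. -/
lemma winnable_ext (p : Equiv.Perm (Fin n)) (t : ℕ) (ht : t ≤ n) (k : ℕ)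
    (hkt : k ≤ t) (hno : ∀ i : Fin n, k ≤ (i : ℕ) → (i : ℕ) < t → ¬ IsLTRMax p i) :
    Winnable (n + 1) k (ext p t ht) := by
  set q := ext p t ht with hq
  refine ⟨⟨t, by omega⟩, hkt, ?_, ?_, ?_⟩
  · intro a ha
    have ha' : (a : ℕ) < t := ha
    rw [ext_apply_lt p t ht a ha', ext_apply_eq p t ht _ rfl]
    exact Fin.castSucc_lt_last _
  · intro i hki hltr
    by_contra hcon
    rw [not_le, Fin.lt_def] at hcon
    have hit : (i : ℕ) < t := hcon
    set m : Fin n := ⟨(i : ℕ), by omega⟩ with hm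
    have hmv : (m : ℕ) = (i : ℕ) := rfl
    refine hno m (by omega) (by omega) ?_
    intro a ham
    have ham' : (a : ℕ) < (i : ℕ) := by rw [Fin.lt_def] at ham; omega
    have h1 : q a.castSucc = (p a).castSucc := by
      rw [hq, ext_apply_lt p t ht a.castSucc (by rw [Fin.coe_castSucc]; omega)]
      exact congrArg Fin.castSucc (congrArg p (Fin.ext (by simp)))
    have h2 : q i = (p m).castSucc := by
      rw [hq, ext_apply_lt p t ht i hit]
    have h3 : q a.castSucc < q i :=
      hltr a.castSucc (by rw [Fin.lt_def, Fin.coe_castSucc]; omega)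
    rw [h1, h2] at h3
    exact (Fin.castSucc_lt_castSucc_iff.mp h3)
  · rw [ext_apply_eq p t ht _ rfl]
    simp

/-- From avoidance of the extension, the insertion position is a splitting point. -/
lemma split_of_avoids (p : Equiv.Perm (Fin n)) (q : Equiv.Perm (Fin (n + 1)))
    (t : Fin (n + 1)) (hqt : (q t : ℕ) = n)
    (hq : ∀ i : Fin n, (q (if (i : ℕ) < (t : ℕ) then i.castSucc else i.succ) : ℕ) = (p i : ℕ))
    (hav : Avoids231 q) : Split p (t : ℕ) := by
  intro i l hi hl
  by_contra hcon
  have hne : p l ≠ p i := fun he => by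
    have := p.injective he; omega
  have hlt : p l < p i := lt_of_le_of_ne (not_lt.mp hcon) hne
  have e1 : (q i.castSucc : ℕ) = (p i : ℕ) := by
    have := hq i; rw [if_pos hi] at this; exact this
  have e2 : (q l.succ : ℕ) = (p l : ℕ) := by
    have := hq l; rw [if_neg (by omega)] at this; exact this
  refine hav ⟨i.castSucc, t, l.succ, ?_, ?_, ?_, ?_⟩
  · show (i.castSucc : ℕ) < (t : ℕ); simpa using hi
  · show (t : ℕ) < (l.succ : ℕ); simp; omega
  · show (q l.succ : ℕ) < (q i.castSucc : ℕ)
    rw [e1, e2]; exact hlt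
  · show (q i.castSucc : ℕ) < (q t : ℕ)
    rw [e1, hqt]; exact (p i).isLt

/-- From winnability, `k ≤ t` and there is no LTR max of `p` in `[k, t)`. -/
lemma winnable_conds (p : Equiv.Perm (Fin n)) (q : Equiv.Perm (Fin (n + 1)))
    (t : Fin (n + 1)) (hqt : (q t : ℕ) = n)
    (hq : ∀ i : Fin n, (q (if (i : ℕ) < (t : ℕ) then i.castSucc else i.succ) : ℕ) = (p i : ℕ))
    (k : ℕ) (hw : Winnable (n + 1) k q) :
    k ≤ (t : ℕ) ∧ ∀ i : Fin n, k ≤ (i : ℕ) → (i : ℕ) < (t : ℕ) → ¬ IsLTRMax p i := by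
  obtain ⟨j, hkj, hjltr, hjmin, hjval⟩ := hw
  have hjt : t = j := by
    apply q.injective
    exact Fin.ext (by omega)
  subst hjt
  refine ⟨hkj, ?_⟩
  intro i hki hit hltr
  have hltrq : IsLTRMax q i.castSucc := by
    intro a ha
    have ha' : (a : ℕ) < (i : ℕ) := by simpa [Fin.lt_def] using ha
    set m : Fin n := ⟨(a : ℕ), by omega⟩ with hm
    have e1 : (q a : ℕ) = (p m : ℕ) := by
      have := hq m
      rw [if_pos (by simp [hm]; omega)] at this
      have hma : m.castSucc = a := Fin.ext (by simp [hm])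
      rwa [hma] at this
    have e2 : (q i.castSucc : ℕ) = (p i : ℕ) := by
      have := hq i; rw [if_pos hit] at this; exact this
    have : p m < p i := hltr m (by simp [hm, Fin.lt_def]; omega)
    show (q a : ℕ) < (q i.castSucc : ℕ)
    rw [e1, e2]; exact this
  have h5 := hjmin i.castSucc (by simpa using hki) hltrq
  have h6 : (t : ℕ) ≤ (i : ℕ) := by simpa [Fin.le_def] using h5
  omega

end WinnExtAux

/-- Every 231-avoiding permutation of size `n` has a unique extension to size `n+1`
that is 231-avoiding and `k`-winnable. -/
theorem exists_unique_winnable_extension (n k : ℕ) (hk : k ≤ n)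
    (p : Equiv.Perm (Fin n)) (hp : Avoids231 p) :
    ∃! q : Equiv.Perm (Fin (n + 1)),
      IsExtension p q ∧ Avoids231 q ∧ Winnable (n + 1) k q := by
  classical
  open WinnExtAux in
  have hex : ∃ t : ℕ, k ≤ t ∧ t ≤ n ∧ WinnExtAux.Split p t := ⟨n, hk, le_rfl, WinnExtAux.split_n p⟩
  set T := Nat.find hex with hT
  obtain ⟨hkT, hTn, hTs⟩ := Nat.find_spec hex
  have hnoLtr : ∀ i : Fin n, k ≤ (i : ℕ) → (i : ℕ) < T → ¬ IsLTRMax p i := by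
    intro i hki hiT hltr
    exact Nat.find_min hex hiT ⟨hki, le_of_lt i.isLt, WinnExtAux.split_of_ltrmax p hp i hltr⟩
  refine ⟨WinnExtAux.ext p T hTn, ⟨WinnExtAux.ext_isExtension p T hTn,
    WinnExtAux.avoids_ext p hp T hTn hTs, WinnExtAux.winnable_ext p T hTn k hkT hnoLtr⟩, ?_⟩
  rintro q ⟨⟨t, hqt, hq⟩, hav, hw⟩
  have hsplit' : WinnExtAux.Split p (t : ℕ) := WinnExtAux.split_of_avoids p q t hqt hq hav
  obtain ⟨hkt', hno'⟩ := WinnExtAux.winnable_conds p q t hqt hq k hw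
  have hTt : T ≤ (t : ℕ) := Nat.find_min' hex ⟨hkt', t.is_le, hsplit'⟩
  have htT : (t : ℕ) = T := by
    by_contra hne
    have hTlt : T < (t : ℕ) := lt_of_le_of_ne hTt (Ne.symm hne)
    have hTn' : T < n := lt_of_lt_of_le hTlt t.is_le
    exact hno' ⟨T, hTn'⟩ hkT hTlt (WinnExtAux.ltrmax_of_split p T hTn' hTs)
  have := WinnExtAux.ext_unique p q t hqt hq
  rw [this]
  exact WinnExtAux.ext_congr p (t : ℕ) T t.is_le hTn htT
end

section
/- For every N ≥ 1 and every 0 ≤ k ≤ N-1, the number of permutations of size N that are both 231-avoiding and k-winnable equals the Catalan number C_{N-1}. In particular, this count is independent of k. -/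
open List Finset

namespace Cat231

open scoped Classical

/-- Finset of lists that are permutations of `range n`. -/
noncomputable def perms (n : ℕ) : Finset (List ℕ) := (List.range n).permutations.toFinset

lemma mem_perms {n : ℕ} {l : List ℕ} : l ∈ perms n ↔ l.Perm (List.range n) := by
  simp [perms, List.mem_permutations]

/-- `l` contains a 231 pattern. -/
def HasPat (l : List ℕ) : Prop := ∃ a b c : ℕ, [a, b, c].Sublist l ∧ c < a ∧ a < b

def AvL (l : List ℕ) : Prop := ¬ HasPat l

/-- position `j` is a left-to-right maximum of `l`. -/
def Ltr (l : List ℕ) (j : ℕ) : Prop :=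
  j < l.length ∧ ∀ i < j, l.getD i 0 < l.getD j 0

/-- no left-to-right maximum at a position `≥ k`. -/
def NoLtr (k : ℕ) (l : List ℕ) : Prop := ∀ i, k ≤ i → ¬ Ltr l i

lemma HasPat.sublist {l l' : List ℕ} (h : l <+ l') (hp : HasPat l) : HasPat l' := by
  obtain ⟨a, b, c, hs, h1, h2⟩ := hp
  exact ⟨a, b, c, hs.trans h, h1, h2⟩

lemma haspat_map_add {c : ℕ} {w : List ℕ} : HasPat (w.map (c + ·)) ↔ HasPat w := by
  constructor
  · rintro ⟨a, b, d, hs, h1, h2⟩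
    rw [List.sublist_map_iff] at hs
    obtain ⟨l', hl', he⟩ := hs
    match l', he with
    | [a', b', d'], he =>
      simp only [List.map_cons, List.map_nil, List.cons.injEq, and_true] at he
      obtain ⟨ha, hb, hd⟩ := he
      exact ⟨a', b', d', hl', by omega, by omega⟩
  · rintro ⟨a, b, d, hs, h1, h2⟩
    exact ⟨c + a, c + b, c + d, by simpa using hs.map (c + ·), by omega, by omega⟩

lemma avl_of_sublist {l l' : List ℕ} (h : l <+ l') (hp : AvL l') : AvL l :=
  fun hh => hp (hh.sublist h)

/-- bridge: pattern existence via indices. -/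
lemma haspat_iff_indices {l : List ℕ} :
    HasPat l ↔ ∃ i j k : Fin l.length, i < j ∧ j < k ∧ l.get k < l.get i ∧ l.get i < l.get j := by
  constructor
  · rintro ⟨a, b, c, hs, h1, h2⟩
    obtain ⟨is, he, hp⟩ := List.sublist_eq_map_getElem hs
    match is, he with
    | [i, j, k], he =>
      simp only [List.map_cons, List.map_nil, List.cons.injEq, and_true] at he
      obtain ⟨ha, hb, hc⟩ := he
      simp only [List.pairwise_cons] at hp
      have hij : (i:ℕ) < (j:ℕ) := hp.1 j (by simp)
      have hjk : (j:ℕ) < (k:ℕ) := hp.2.1 k (by simp)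
      refine ⟨i, j, k, hij, hjk, ?_, ?_⟩ <;> simp only [List.get_eq_getElem, Fin.getElem_fin] at ha hb hc ⊢ <;> omega
  · rintro ⟨i, j, k, hij, hjk, h1, h2⟩
    refine ⟨l.get i, l.get j, l.get k, ?_, h1, h2⟩
    have : List.map (l[·]) [i, j, k] <+ l := by
      apply List.map_getElem_sublist
      simp only [List.pairwise_cons]
      refine ⟨fun x hx => ?_, fun x hx => ?_, by simp⟩
      · simp only [List.mem_cons, List.not_mem_nil, or_false, List.mem_singleton] at hx
        rcases hx with rfl | rfl
        · exact_mod_cast hij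
        · exact_mod_cast lt_trans hij hjk
      · simp only [List.mem_singleton, List.not_mem_nil, or_false] at hx
        subst hx; exact_mod_cast hjk
    simpa using this


lemma perms_length {n : ℕ} {l : List ℕ} (h : l ∈ perms n) : l.length = n := by
  have := (mem_perms.mp h).length_eq; simpa using this

lemma perms_nodup {n : ℕ} {l : List ℕ} (h : l ∈ perms n) : l.Nodup :=
  (mem_perms.mp h).symm.nodup List.nodup_range

lemma perms_mem_iff {n : ℕ} {l : List ℕ} (h : l ∈ perms n) {x : ℕ} : x ∈ l ↔ x < n := by
  rw [(mem_perms.mp h).mem_iff, List.mem_range]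

lemma values_split {s t : List ℕ} {a b : ℕ} (h : (s ++ t).Perm (List.range (a+b)))
    (hs : s.length = a) (hlt : ∀ x ∈ s, ∀ y ∈ t, x < y) :
    s.Perm (List.range a) ∧ t.Perm ((List.range b).map (a + ·)) := by
  have hnd : (s ++ t).Nodup := h.symm.nodup List.nodup_range
  have hmem : ∀ x, x ∈ s ++ t ↔ x < a + b := by
    intro x; rw [h.mem_iff, List.mem_range]
  have hts : t.length = b := by
    have := h.length_eq; simp at this; omega
  have hnds : s.Nodup := hnd.of_append_left
  have hndt : t.Nodup := hnd.of_append_right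
  have hxa : ∀ x ∈ s, x < a := by
    intro x hx
    have hsub : t.toFinset ⊆ Finset.Ioo x (a + b) := by
      intro y hy
      rw [List.mem_toFinset] at hy
      rw [Finset.mem_Ioo]
      exact ⟨hlt x hx y hy, by have := (hmem y).1 (by simp [hy]); omega⟩
    have h1 : t.toFinset.card = b := by rw [List.toFinset_card_of_nodup hndt, hts]
    have h2 := Finset.card_le_card hsub
    rw [h1, Nat.card_Ioo] at h2
    have : x < a + b := (hmem x).1 (by simp [hx])
    omega
  have hsf : s.toFinset = Finset.range a := by
    apply Finset.eq_of_subset_of_card_le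
    · intro x hx; rw [List.mem_toFinset] at hx; rw [Finset.mem_range]; exact hxa x hx
    · rw [Finset.card_range, List.toFinset_card_of_nodup hnds, hs]
  have hsp : s.Perm (List.range a) := by
    apply List.perm_of_nodup_nodup_toFinset_eq hnds List.nodup_range
    rw [hsf]; ext x; simp
  refine ⟨hsp, ?_⟩
  have : (s ++ t).Perm (s ++ (List.range b).map (a + ·)) := by
    rw [List.range_add] at h
    exact h.trans (hsp.symm.append_right _)
  exact (List.perm_append_left_iff s).mp this

lemma glue_avl {N m : ℕ} {u w : List ℕ} (hmN : m ≤ N - 1) (hu : AvL u) (hw : AvL w)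
    (hux : ∀ x ∈ u, x < m) (hwx : ∀ y ∈ w, m ≤ y ∧ y < N - 1) :
    AvL (u ++ (N - 1) :: w) := by
  rintro ⟨a, b, c, hs, h1, h2⟩
  rw [List.sublist_append_iff] at hs
  obtain ⟨s₁, s₂, heq, hs1, hs2⟩ := hs
  rcases s₁ with _ | ⟨x, _ | ⟨y, _ | ⟨z, s⟩⟩⟩
  · -- s₁ = [], s₂ = [a,b,c] <+ (N-1) :: w
    simp only [List.nil_append] at heq
    subst heq
    rcases List.sublist_cons_iff.mp hs2 with h3 | ⟨r, hr, hrs⟩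
    · exact hw ⟨a, b, c, h3, h1, h2⟩
    · simp only [List.cons.injEq] at hr
      obtain ⟨rfl, rfl⟩ := hr
      have hb : b ∈ w := hrs.subset (by simp)
      have := (hwx b hb).2
      omega
  · -- s₁ = [x]
    simp only [List.cons_append, List.nil_append, List.cons.injEq] at heq
    obtain ⟨rfl, rfl⟩ := heq
    have ha : a < m := hux a (hs1.subset (by simp))
    rcases List.sublist_cons_iff.mp hs2 with h3 | ⟨r, hr, hrs⟩
    · have hc : c ∈ w := h3.subset (by simp)
      have := (hwx c hc).1
      omega
    · simp only [List.cons.injEq] at hr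
      obtain ⟨rfl, rfl⟩ := hr
      have hc : c ∈ w := hrs.subset (by simp)
      have := (hwx c hc).1
      omega
  · -- s₁ = [x, y]
    simp only [List.cons_append, List.nil_append, List.cons.injEq] at heq
    obtain ⟨rfl, rfl, rfl⟩ := heq
    have ha : a < m := hux a (hs1.subset (by simp))
    rcases List.sublist_cons_iff.mp hs2 with h3 | ⟨r, hr, hrs⟩
    · have hc : c ∈ w := h3.subset (by simp)
      have := (hwx c hc).1
      omega
    · simp only [List.cons.injEq] at hr
      obtain ⟨rfl, -⟩ := hr
      omega
  · -- s₁ has ≥ 3 elements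
    simp only [List.cons_append, List.cons.injEq] at heq
    obtain ⟨rfl, rfl, rfl, hnil⟩ := heq
    obtain ⟨rfl, rfl⟩ : s = [] ∧ s₂ = [] := by
      constructor <;> cases s <;> simp_all
    exact hu ⟨a, b, c, hs1, h1, h2⟩

lemma split_facts {N m : ℕ} {l : List ℕ} (hN : 1 ≤ N) (hl : l ∈ perms N)
    (hav : AvL l) (hm : l.idxOf (N-1) = m) :
    m < N ∧
    l = l.take m ++ (N - 1) :: l.drop (m+1) ∧
    (l.take m).Perm (List.range m) ∧
    ((l.drop (m+1)).map (· - m)).Perm (List.range (N-1-m)) ∧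
    AvL (l.take m) ∧ AvL ((l.drop (m+1)).map (· - m)) ∧
    ((l.drop (m+1)).map (· - m)).map (m + ·) = l.drop (m+1) := by
  have hlen : l.length = N := perms_length hl
  have hmem : (N-1) ∈ l := (perms_mem_iff hl).2 (by omega)
  have hmlt : m < N := by
    have := List.idxOf_lt_length_iff.mpr hmem
    omega
  have hidx : l[m]'(by omega) = N - 1 := by
    subst hm; exact List.getElem_idxOf _
  have c1 : l = l.take m ++ (N - 1) :: l.drop (m+1) := by
    conv_lhs => rw [← List.take_append_drop m l]
    congr 1
    rw [List.drop_eq_getElem_cons (by omega), hidx]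
  set u := l.take m with hu
  set w := l.drop (m+1) with hwdef
  have hulen : u.length = m := by rw [hu, List.length_take]; omega
  have hnd : (u ++ (N-1) :: w).Nodup := by rw [← c1]; exact perms_nodup hl
  have hdisj : u.Disjoint ((N-1) :: w) := (List.nodup_append'.mp hnd).2.2
  have hlt : ∀ x ∈ u, ∀ y ∈ w, x < y := by
    intro x hx y hy
    by_contra hxy
    have hxne : x ≠ N - 1 := fun h => hdisj hx (by simp [h])
    have hyne : x ≠ y := fun h => hdisj hx (by simp [h, hy])
    have hxN : x < N := (perms_mem_iff hl).1 (by rw [c1]; simp [hx])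
    have hsub : [x, N-1, y] <+ l := by
      rw [c1]
      exact List.Sublist.append (List.singleton_sublist.mpr hx)
        (List.cons_sublist_cons.mpr (List.singleton_sublist.mpr hy))
    exact hav ⟨x, N-1, y, hsub, by omega, by omega⟩
  have huw : (u ++ w).Perm (List.range (m + (N-1-m))) := by
    have h0 : l.Perm (List.range N) := mem_perms.mp hl
    have h1 : ((N-1) :: (u ++ w)).Perm ((N-1) :: List.range (N-1)) := by
      calc (N-1) :: (u ++ w) ~ u ++ (N-1) :: w := List.perm_middle.symm
        _ ~ List.range N := by rw [← c1]; exact h0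
        _ = List.range (N-1) ++ [N-1] := by
            conv_lhs => rw [show N = (N-1) + 1 by omega]
            exact List.range_succ (n := N-1)
        _ ~ (N-1) :: List.range (N-1) := List.perm_append_singleton _ _
    have h2 := (List.perm_cons (N-1)).mp h1
    have : m + (N-1-m) = N - 1 := by omega
    rwa [this]
  obtain ⟨hup, hwp⟩ := values_split huw hulen hlt
  have hwge : ∀ y ∈ w, m ≤ y := by
    intro y hy
    have := hwp.mem_iff.mp hy
    simp only [List.mem_map, List.mem_range] at this
    omega
  have hwrec : (w.map (· - m)).map (m + ·) = w := by
    rw [List.map_map]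
    have h5 : ∀ y ∈ w, ((m + ·) ∘ (· - m)) y = id y := by
      intro y hy; have := hwge y hy; simp; omega
    rw [List.map_congr_left h5, List.map_id]
  have havu : AvL u := avl_of_sublist (List.take_sublist _ _) hav
  have havw : AvL w := avl_of_sublist (List.drop_sublist _ _) hav
  have havv : AvL (w.map (· - m)) := by
    intro hp
    exact havw (by rw [← hwrec]; exact haspat_map_add.mpr hp)
  refine ⟨hmlt, c1, hup, ?_, havu, havv, hwrec⟩
  have := hwp.map (· - m)
  rw [List.map_map] at this
  refine this.trans ?_
  have : ∀ y ∈ List.range (N-1-m), ((· - m) ∘ (m + ·)) y = id y := by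
    intro y hy; simp
  rw [List.map_congr_left this, List.map_id]

lemma card_slice (N m : ℕ) (hN : 1 ≤ N) (hm : m < N) (P : List ℕ → Prop) :
    ((perms N).filter (fun l => AvL l ∧ l.idxOf (N-1) = m ∧ P (l.take m))).card
    = ((perms m).filter (fun u => AvL u ∧ P u)).card *
      ((perms (N-1-m)).filter AvL).card := by
  rw [← Finset.card_product]
  apply Finset.card_nbij' (fun l => (l.take m, (l.drop (m+1)).map (· - m)))
    (fun uv => uv.1 ++ (N-1) :: uv.2.map (m + ·))
  · intro l hl
    rw [Finset.mem_coe, Finset.mem_filter] at hl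
    obtain ⟨hlp, hav, hidx, hP⟩ := hl
    obtain ⟨_, _, hup, hvp, havu, havv, _⟩ := split_facts hN hlp hav hidx
    rw [Finset.mem_coe, Finset.mem_product, Finset.mem_filter, Finset.mem_filter]
    exact ⟨⟨mem_perms.mpr hup, havu, hP⟩, mem_perms.mpr hvp, havv⟩
  · rintro ⟨u, v⟩ huv
    rw [Finset.mem_coe, Finset.mem_product, Finset.mem_filter, Finset.mem_filter] at huv
    obtain ⟨⟨hup, havu, hPu⟩, hvp, havv⟩ := huv
    have hupr := mem_perms.mp hup
    have hvpr := mem_perms.mp hvp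
    have hulen : u.length = m := perms_length hup
    have hux : ∀ x ∈ u, x < m := fun x hx => (perms_mem_iff hup).1 hx
    have hwx : ∀ y ∈ v.map (m + ·), m ≤ y ∧ y < N - 1 := by
      intro y hy
      simp only [List.mem_map] at hy
      obtain ⟨x, hx, rfl⟩ := hy
      have := (perms_mem_iff hvp).1 hx
      omega
    have havw : AvL (v.map (m + ·)) := fun hp => havv (haspat_map_add.mp hp)
    have hmemN : u ++ (N-1) :: v.map (m + ·) ∈ perms N := by
      rw [mem_perms]
      calc u ++ (N-1) :: v.map (m + ·) ~ (N-1) :: (u ++ v.map (m + ·)) :=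
            List.perm_middle
        _ ~ (N-1) :: List.range (N-1) := by
            refine List.Perm.cons _ ?_
            have : (u ++ v.map (m + ·)).Perm
                (List.range m ++ (List.range (N-1-m)).map (m + ·)) :=
              hupr.append (hvpr.map _)
            refine this.trans ?_
            rw [← List.range_add]
            have : m + (N-1-m) = N-1 := by omega
            rw [this]
        _ ~ List.range (N-1) ++ [N-1] := (List.perm_append_singleton _ _).symm
        _ = List.range N := by
            conv_rhs => rw [show N = (N-1) + 1 by omega]
            exact (List.range_succ (n := N-1)).symm
    have hidx : (u ++ (N-1) :: v.map (m + ·)).idxOf (N-1) = m := by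
      rw [List.idxOf_append_of_notMem (by intro hmem; have := hux _ hmem; omega),
        List.idxOf_cons_self, hulen]
      omega
    have htake : (u ++ (N-1) :: v.map (m + ·)).take m = u := List.take_left' hulen
    rw [Finset.mem_coe, Finset.mem_filter]
    refine ⟨hmemN, ?_, hidx, by rw [htake]; exact hPu⟩
    exact glue_avl (by omega) havu havw hux hwx
  · intro l hl
    rw [Finset.mem_coe, Finset.mem_filter] at hl
    obtain ⟨hlp, hav, hidx, hP⟩ := hl
    obtain ⟨_, c1, _, _, _, _, hwrec⟩ := split_facts hN hlp hav hidx
    simp only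
    rw [hwrec, ← c1]
  · rintro ⟨u, v⟩ huv
    rw [Finset.mem_coe, Finset.mem_product, Finset.mem_filter, Finset.mem_filter] at huv
    obtain ⟨⟨hup, havu, hPu⟩, hvp, havv⟩ := huv
    have hulen : u.length = m := perms_length hup
    have htake : (u ++ (N-1) :: v.map (m + ·)).take m = u := List.take_left' hulen
    have hdrop : (u ++ (N-1) :: v.map (m + ·)).drop (m+1) = v.map (m + ·) := by
      have : u ++ (N-1) :: v.map (m + ·) = (u ++ [N-1]) ++ v.map (m + ·) := by simp
      rw [this]
      exact List.drop_left' (by simp [hulen])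
    simp only
    rw [htake, hdrop, List.map_map]
    have : ∀ y ∈ v, ((· - m) ∘ (m + ·)) y = id y := by intro y hy; simp
    rw [List.map_congr_left this, List.map_id]

lemma avl_nil : AvL [] := by
  rintro ⟨a, b, c, hs, -, -⟩
  simp at hs

lemma card_av_zero : ((perms 0).filter AvL).card = 1 := by
  have : (perms 0).filter AvL = {[]} := by
    ext l
    simp only [Finset.mem_filter, Finset.mem_singleton, mem_perms, List.range_zero,
      List.perm_nil]
    constructor
    · rintro ⟨rfl, -⟩; rfl
    · rintro rfl; exact ⟨rfl, avl_nil⟩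
  rw [this, Finset.card_singleton]

lemma card_av : ∀ n, ((perms n).filter AvL).card = catalan n := by
  intro n
  induction n using Nat.strong_induction_on with
  | _ n IH =>
    match n with
    | 0 => rw [catalan_zero]; exact card_av_zero
    | (n+1) =>
      have hfib : ((perms (n+1)).filter AvL).card =
          ∑ m ∈ Finset.range (n+1),
            (((perms (n+1)).filter AvL).filter (fun l => l.idxOf n = m)).card := by
        apply Finset.card_eq_sum_card_fiberwise
        intro l hl
        rw [Finset.mem_coe, Finset.mem_filter] at hl
        rw [Finset.mem_coe, Finset.mem_range]
        have : l.idxOf n < l.length :=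
          List.idxOf_lt_length_iff.mpr ((perms_mem_iff hl.1).2 (by omega))
        rw [perms_length hl.1] at this
        omega
      rw [hfib]
      have hterm : ∀ m ∈ Finset.range (n+1),
          (((perms (n+1)).filter AvL).filter (fun l => l.idxOf n = m)).card =
          catalan m * catalan (n - m) := by
        intro m hm
        rw [Finset.mem_range] at hm
        have e1 : ((perms (n+1)).filter AvL).filter (fun l => l.idxOf n = m) =
            (perms (n+1)).filter
              (fun l => AvL l ∧ l.idxOf ((n+1)-1) = m ∧ True) := by
          rw [Finset.filter_filter]
          apply Finset.filter_congr
          intro l _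
          simp
        have hcs := card_slice (n+1) m (by omega) (by omega) (fun _ => True)
        beta_reduce at hcs
        rw [e1]
        convert hcs using 2
        · ext l
          simp only [Finset.mem_filter]
        · rw [← IH m (by omega)]
          congr 1
          try (ext l; simp only [Finset.mem_filter, and_true])
        · rw [show n + 1 - 1 - m = n - m from by omega]
          exact (IH (n - m) (by omega)).symm
      rw [Finset.sum_congr rfl hterm]
      rw [catalan_succ n]
      rw [Fin.sum_univ_eq_sum_range (fun i => catalan i * catalan (n - i))]

lemma ltr_take {l : List ℕ} {m i : ℕ} (hm : m ≤ l.length) :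
    Ltr (l.take m) i ↔ i < m ∧ Ltr l i := by
  have hlen : (l.take m).length = m := by rw [List.length_take]; omega
  have hget : ∀ j < m, (l.take m).getD j 0 = l.getD j 0 := by
    intro j hj
    rw [List.getD_eq_getElem _ _ (by omega), List.getD_eq_getElem _ _ (by omega)]
    exact List.getElem_take
  constructor
  · rintro ⟨h1, h2⟩
    rw [hlen] at h1
    refine ⟨h1, by omega, fun j hj => ?_⟩
    rw [← hget j (by omega), ← hget i h1]
    exact h2 j hj
  · rintro ⟨h1, h2, h3⟩
    refine ⟨by omega, fun j hj => ?_⟩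
    rw [hget j (by omega), hget i (by omega)]
    exact h3 j hj

lemma noltr_iff {m k : ℕ} {u : List ℕ} (hu : u ∈ perms m) (hm : 1 ≤ m) :
    NoLtr k u ↔ u.idxOf (m-1) < k := by
  have hlen : u.length = m := perms_length hu
  have hnd : u.Nodup := perms_nodup hu
  have hmem : m - 1 ∈ u := (perms_mem_iff hu).2 (by omega)
  set j := u.idxOf (m-1) with hj
  have hjlen : j < m := by
    have := List.idxOf_lt_length_iff.mpr hmem; omega
  have hjget : u[j]'(by omega) = m - 1 := List.getElem_idxOf _
  have hother : ∀ i (h : i < m), i ≠ j → u[i]'(by omega) < m - 1 := by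
    intro i h hne
    have h1 : u[i]'(by omega) < m := (perms_mem_iff hu).1 (List.getElem_mem _)
    have h2 : u[i]'(by omega) ≠ m - 1 := by
      intro he
      exact hne (hnd.getElem_inj_iff.mp (he.trans hjget.symm))
    omega
  have hltrj : Ltr u j := by
    refine ⟨by omega, fun i hi => ?_⟩
    rw [List.getD_eq_getElem _ _ (by omega), List.getD_eq_getElem _ _ (by omega), hjget]
    exact hother i (by omega) (by omega)
  constructor
  · intro h
    by_contra hc
    exact h j (by omega) hltrj
  · intro h i hki ⟨hilen, hltr⟩
    have hij : i ≠ j := by omega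
    have := hltr j (by omega)
    rw [List.getD_eq_getElem _ _ (by omega), List.getD_eq_getElem _ _ (by omega), hjget] at this
    have := hother i (by omega) hij
    omega

lemma card_D_zero (k : ℕ) : ((perms 0).filter (fun u => AvL u ∧ NoLtr k u)).card = 1 := by
  have : (perms 0).filter (fun u => AvL u ∧ NoLtr k u) = {[]} := by
    ext l
    simp only [Finset.mem_filter, Finset.mem_singleton, mem_perms, List.range_zero,
      List.perm_nil]
    constructor
    · rintro ⟨rfl, -⟩; rfl
    · rintro rfl
      refine ⟨rfl, avl_nil, fun i _ hi => ?_⟩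
      have := hi.1; simp at this
  rw [this, Finset.card_singleton]

lemma card_D {m : ℕ} (k : ℕ) (hm : 1 ≤ m) :
    ((perms m).filter (fun u => AvL u ∧ NoLtr k u)).card
      = ∑ j ∈ Finset.range (min k m), catalan j * catalan (m-1-j) := by
  have e0 : (perms m).filter (fun u => AvL u ∧ NoLtr k u)
      = (perms m).filter (fun u => AvL u ∧ u.idxOf (m-1) < k) := by
    ext u
    simp only [Finset.mem_filter]
    constructor
    · rintro ⟨hu, hav, hnl⟩
      exact ⟨hu, hav, (noltr_iff hu hm).mp hnl⟩
    · rintro ⟨hu, hav, hidx⟩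
      exact ⟨hu, hav, (noltr_iff hu hm).mpr hidx⟩
  rw [e0]
  have hfib : ((perms m).filter (fun u => AvL u ∧ u.idxOf (m-1) < k)).card =
      ∑ j ∈ Finset.range (min k m),
        (((perms m).filter (fun u => AvL u ∧ u.idxOf (m-1) < k)).filter
          (fun u => u.idxOf (m-1) = j)).card := by
    apply Finset.card_eq_sum_card_fiberwise
    intro u hu
    rw [Finset.mem_coe, Finset.mem_filter] at hu
    rw [Finset.mem_coe, Finset.mem_range]
    have : u.idxOf (m-1) < u.length :=
      List.idxOf_lt_length_iff.mpr ((perms_mem_iff hu.1).2 (by omega))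
    rw [perms_length hu.1] at this
    have := hu.2.2
    omega
  rw [hfib]
  apply Finset.sum_congr rfl
  intro j hj
  rw [Finset.mem_range] at hj
  have e1 : ((perms m).filter (fun u => AvL u ∧ u.idxOf (m-1) < k)).filter
      (fun u => u.idxOf (m-1) = j) =
      (perms m).filter (fun u => AvL u ∧ u.idxOf (m-1) = j ∧ True) := by
    ext u
    simp only [Finset.mem_filter, and_true]
    constructor
    · rintro ⟨⟨hu, hav, -⟩, hidx⟩
      exact ⟨hu, hav, hidx⟩
    · rintro ⟨hu, hav, hidx⟩
      exact ⟨⟨hu, hav, by omega⟩, hidx⟩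
  rw [e1]
  have hcs := card_slice m j hm (by omega) (fun _ => True)
  convert hcs using 2
  · ext u
    simp only [Finset.mem_filter, and_true]
  · rw [← card_av j]
    congr 1
    try (ext u; simp only [Finset.mem_filter, and_true])
  · exact (card_av (m-1-j)).symm

/-- The target list-level set: 231-avoiding and `k`-winnable. -/
noncomputable def T (N k : ℕ) : Finset (List ℕ) :=
  (perms N).filter (fun l => AvL l ∧ k ≤ l.idxOf (N-1) ∧ NoLtr k (l.take (l.idxOf (N-1))))

lemma card_T {N k : ℕ} (hN : 1 ≤ N) :
    (T N k).card = ∑ m ∈ Finset.Ico k N,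
      ((perms m).filter (fun u => AvL u ∧ NoLtr k u)).card * catalan (N-1-m) := by
  have hfib : (T N k).card = ∑ m ∈ Finset.Ico k N,
      ((T N k).filter (fun l => l.idxOf (N-1) = m)).card := by
    apply Finset.card_eq_sum_card_fiberwise
    intro l hl
    rw [Finset.mem_coe, T, Finset.mem_filter] at hl
    rw [Finset.mem_coe, Finset.mem_Ico]
    have : l.idxOf (N-1) < l.length :=
      List.idxOf_lt_length_iff.mpr ((perms_mem_iff hl.1).2 (by omega))
    rw [perms_length hl.1] at this
    exact ⟨hl.2.2.1, this⟩
  rw [hfib]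
  apply Finset.sum_congr rfl
  intro m hm
  rw [Finset.mem_Ico] at hm
  have e1 : (T N k).filter (fun l => l.idxOf (N-1) = m) =
      (perms N).filter (fun l => AvL l ∧ l.idxOf (N-1) = m ∧ NoLtr k (l.take m)) := by
    ext l
    simp only [T, Finset.mem_filter]
    constructor
    · rintro ⟨⟨hl, hav, -, hnl⟩, hidx⟩
      exact ⟨hl, hav, hidx, by rwa [hidx] at hnl⟩
    · rintro ⟨hl, hav, hidx, hnl⟩
      exact ⟨⟨hl, hav, by omega, by rwa [hidx]⟩, hidx⟩
  rw [e1]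
  have hcs := card_slice N m hN hm.2 (NoLtr k)
  convert hcs using 2
  exact (card_av (N-1-m)).symm

lemma d_kk (k : ℕ) :
    ((perms k).filter (fun u => AvL u ∧ NoLtr k u)).card = catalan k := by
  match k with
  | 0 => rw [catalan_zero]; exact card_D_zero 0
  | (k+1) =>
    rw [card_D (k+1) (by omega), min_self, catalan_succ k,
      Fin.sum_univ_eq_sum_range (fun i => catalan i * catalan (k - i))]
    apply Finset.sum_congr rfl
    intro j hj
    congr 1

lemma sum_identity : ∀ k n : ℕ, k ≤ n →
    ∑ m ∈ Finset.Ico k (n+1),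
      ((perms m).filter (fun u => AvL u ∧ NoLtr k u)).card * catalan (n-m)
    = catalan n := by
  intro k
  induction k with
  | zero =>
    intro n _
    have : Finset.Ico 0 (n+1) = Finset.range (n+1) := by
      rw [Finset.range_eq_Ico]
    rw [this, Finset.sum_range_succ']
    have hz : ∀ i ∈ Finset.range n,
        ((perms (i+1)).filter (fun u => AvL u ∧ NoLtr 0 u)).card * catalan (n-(i+1)) = 0 := by
      intro i _
      rw [card_D 0 (by omega)]
      simp
    rw [Finset.sum_congr rfl hz]
    rw [card_D_zero 0]
    simp
  | succ k IH =>
    intro n hn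
    -- peel the bottom element from the IH sum
    have hpeel : ∑ m ∈ Finset.Ico k (n+1),
        ((perms m).filter (fun u => AvL u ∧ NoLtr k u)).card * catalan (n-m)
        = ((perms k).filter (fun u => AvL u ∧ NoLtr k u)).card * catalan (n-k)
          + ∑ m ∈ Finset.Ico (k+1) (n+1),
            ((perms m).filter (fun u => AvL u ∧ NoLtr k u)).card * catalan (n-m) :=
      Finset.sum_eq_sum_Ico_succ_bot (by omega) _
    have hsplit : ∀ m ∈ Finset.Ico (k+1) (n+1),
        ((perms m).filter (fun u => AvL u ∧ NoLtr (k+1) u)).card * catalan (n-m)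
        = ((perms m).filter (fun u => AvL u ∧ NoLtr k u)).card * catalan (n-m)
          + (catalan k * catalan (m-1-k)) * catalan (n-m) := by
      intro m hm
      rw [Finset.mem_Ico] at hm
      rw [card_D (k+1) (by omega), card_D k (by omega),
        min_eq_left (by omega), min_eq_left (by omega), Finset.sum_range_succ]
      ring
    rw [Finset.sum_congr rfl hsplit, Finset.sum_add_distrib]
    have hc2 : ∑ m ∈ Finset.Ico (k+1) (n+1),
        (catalan k * catalan (m-1-k)) * catalan (n-m)
        = catalan k * catalan (n-k) := by
      rw [Finset.sum_Ico_eq_sum_range]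
      have : n + 1 - (k+1) = n - k := by omega
      rw [this]
      have he : ∀ t ∈ Finset.range (n-k),
          (catalan k * catalan ((k+1+t)-1-k)) * catalan (n-(k+1+t))
          = catalan k * (catalan t * catalan ((n-k-1) - t)) := by
        intro t ht
        rw [Finset.mem_range] at ht
        have e1 : (k+1+t)-1-k = t := by omega
        have e2 : n-(k+1+t) = (n-k-1) - t := by omega
        rw [e1, e2]; ring
      rw [Finset.sum_congr rfl he, ← Finset.mul_sum]
      congr 1
      have : n - k = (n-k-1) + 1 := by omega
      rw [this, catalan_succ (n-k-1),
        Fin.sum_univ_eq_sum_range (fun i => catalan i * catalan ((n-k-1) - i))]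
      apply Finset.sum_congr rfl
      intro i _
      congr 2
    rw [hc2]
    have hIH := IH n (by omega)
    rw [hpeel, d_kk k] at hIH
    omega

lemma card_T_catalan {N k : ℕ} (hN : 1 ≤ N) (hk : k ≤ N - 1) :
    (T N k).card = catalan (N-1) := by
  rw [card_T hN]
  have e : N = (N-1) + 1 := by omega
  rw [show Finset.Ico k N = Finset.Ico k ((N-1)+1) from by rw [← e]]
  exact sum_identity k (N-1) hk

section Transfer

variable {N : ℕ} (p : Equiv.Perm (Fin N))

/-- the list of values of a permutation. -/
def toList (p : Equiv.Perm (Fin N)) : List ℕ := List.ofFn (fun x => (p x : ℕ))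

lemma toList_length : (toList p).length = N := by simp [toList]

lemma toList_get (i : ℕ) (hi : i < N) :
    (toList p)[i]'(by simp [toList]; omega) = (p ⟨i, hi⟩ : ℕ) := by
  simp [toList]

lemma toList_nodup : (toList p).Nodup := by
  rw [toList, List.nodup_ofFn]
  exact fun a b hab => p.injective (Fin.val_injective hab)

lemma toList_mem_perms : toList p ∈ perms N := by
  rw [mem_perms]
  apply List.perm_of_nodup_nodup_toFinset_eq (toList_nodup p) List.nodup_range
  ext x
  simp only [List.mem_toFinset, List.mem_range, toList, List.mem_ofFn, Set.mem_range]
  constructor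
  · rintro ⟨i, rfl⟩; exact (p i).isLt
  · intro hx; exact ⟨p.symm ⟨x, hx⟩, by simp⟩

lemma avoids_iff_avl : Avoids231 p ↔ AvL (toList p) := by
  rw [Avoids231, AvL, haspat_iff_indices]
  apply not_congr
  have hlen : (toList p).length = N := toList_length p
  have hget : ∀ (x : ℕ) (hx : x < N) (hx' : x < (toList p).length),
      (toList p).get ⟨x, hx'⟩ = (p ⟨x, hx⟩ : ℕ) := by
    intro x hx hx'
    simp only [List.get_eq_getElem]
    exact toList_get p x hx
  constructor
  · rintro ⟨i, j, l, hij, hjl, h1, h2⟩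
    refine ⟨⟨i.1, by omega⟩, ⟨j.1, by omega⟩, ⟨l.1, by omega⟩, ?_, ?_, ?_, ?_⟩
    · rw [Fin.lt_def]; exact Fin.lt_def.mp hij
    · rw [Fin.lt_def]; exact Fin.lt_def.mp hjl
    · rw [hget l.1 l.isLt, hget i.1 i.isLt]
      simp only [Fin.eta]
      exact Fin.lt_def.mp h1
    · rw [hget i.1 i.isLt, hget j.1 j.isLt]
      simp only [Fin.eta]
      exact Fin.lt_def.mp h2
  · rintro ⟨i, j, l, hij, hjl, h1, h2⟩
    refine ⟨⟨i.1, by omega⟩, ⟨j.1, by omega⟩, ⟨l.1, by omega⟩, ?_, ?_, ?_, ?_⟩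
    · rw [Fin.lt_def]; exact Fin.lt_def.mp hij
    · rw [Fin.lt_def]; exact Fin.lt_def.mp hjl
    · rw [Fin.lt_def]
      rw [hget l.1 (by omega) l.isLt, hget i.1 (by omega) i.isLt] at h1
      exact h1
    · rw [Fin.lt_def]
      rw [hget i.1 (by omega) i.isLt, hget j.1 (by omega) j.isLt] at h2
      exact h2

lemma ltr_iff {i : ℕ} (hi : i < N) : Ltr (toList p) i ↔ IsLTRMax p ⟨i, hi⟩ := by
  have hlen : (toList p).length = N := toList_length p
  constructor
  · rintro ⟨h1, h2⟩ i' hlt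
    rw [Fin.lt_def] at hlt
    have := h2 i'.1 hlt
    rw [List.getD_eq_getElem _ _ (by omega), List.getD_eq_getElem _ _ (by omega),
      toList_get p i'.1 (by omega), toList_get p i hi] at this
    rw [Fin.lt_def]
    simpa using this
  · intro h
    refine ⟨by omega, fun i' hlt => ?_⟩
    have := h ⟨i', by omega⟩ (by rw [Fin.lt_def]; exact hlt)
    rw [Fin.lt_def] at this
    rw [List.getD_eq_getElem _ _ (by omega), List.getD_eq_getElem _ _ (by omega),
      toList_get p i' (by omega), toList_get p i hi]
    exact this

lemma toList_indexOf (hN : 1 ≤ N) :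
    (toList p).idxOf (N-1) = (p.symm ⟨N-1, by omega⟩ : ℕ) := by
  have hlen : (toList p).length = N := toList_length p
  have hmem : N - 1 ∈ toList p := (perms_mem_iff (toList_mem_perms p)).2 (by omega)
  have hidxlt : (toList p).idxOf (N-1) < N := by
    have := List.idxOf_lt_length_iff.mpr hmem; omega
  have h1 : (toList p)[(toList p).idxOf (N-1)]'(by omega) = N - 1 :=
    List.getElem_idxOf (by omega)
  have h2 : (toList p)[(p.symm ⟨N-1, by omega⟩ : ℕ)]'(by omega) = N - 1 := by
    rw [toList_get p _ (p.symm ⟨N-1, by omega⟩).isLt]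
    simp only [Fin.eta, Equiv.apply_symm_apply]
  exact (toList_nodup p).getElem_inj_iff.mp (h1.trans h2.symm)

lemma winnable_iff (k : ℕ) (hN : 1 ≤ N) :
    Winnable N k p ↔ (k ≤ (toList p).idxOf (N-1) ∧
      NoLtr k ((toList p).take ((toList p).idxOf (N-1)))) := by
  have hlen : (toList p).length = N := toList_length p
  set idx := (toList p).idxOf (N-1) with hidx
  set j₀ : Fin N := p.symm ⟨N-1, by omega⟩ with hj₀
  have hidx₀ : idx = (j₀ : ℕ) := toList_indexOf p hN
  have hidxlt : idx < N := by rw [hidx₀]; exact j₀.isLt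
  have hpj₀ : (p j₀ : ℕ) = N - 1 := by rw [hj₀]; simp
  constructor
  · rintro ⟨j, hkj, hltr, hmin, hval⟩
    have hjj : j = j₀ := by
      apply p.injective
      apply Fin.val_injective
      rw [hpj₀, hval]
    subst hjj
    refine ⟨by omega, fun i hki hLtr => ?_⟩
    rw [ltr_take (by omega)] at hLtr
    obtain ⟨hiidx, hLtr⟩ := hLtr
    have := hmin ⟨i, by omega⟩ hki ((ltr_iff p (by omega)).mp hLtr)
    rw [Fin.le_def] at this
    simp only at this
    omega
  · rintro ⟨hk, hnl⟩
    refine ⟨j₀, by omega, ?_, ?_, hpj₀⟩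
    · intro i hlt
      rw [Fin.lt_def]
      have h1 : (p i : ℕ) < N := (p i).isLt
      have h2 : p i ≠ p j₀ := fun h => by
        have := p.injective h; subst this; exact absurd hlt (lt_irrefl _)
      have h3 : (p i : ℕ) ≠ N - 1 := fun h =>
        h2 (Fin.val_injective (by rw [h, hpj₀]))
      omega
    · intro i hki hltr
      rw [Fin.le_def]
      by_contra hc
      push_neg at hc
      have hiv : (i : ℕ) < idx := by omega
      apply hnl (i : ℕ) hki
      rw [ltr_take (by omega)]
      refine ⟨hiv, ?_⟩
      rw [ltr_iff p (by omega)]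
      simpa [Fin.eta] using hltr

lemma exists_perm {N : ℕ} {l : List ℕ} (hl : l ∈ perms N) :
    ∃ p : Equiv.Perm (Fin N), toList p = l := by
  have hlen := perms_length hl
  have hnd := perms_nodup hl
  have hbnd : ∀ i : Fin N, l[(i:ℕ)]'(by omega) < N := by
    intro i
    exact (perms_mem_iff hl).1 (List.getElem_mem _)
  set f : Fin N → Fin N := fun i => ⟨l[(i:ℕ)]'(by omega), hbnd i⟩ with hf
  have hinj : Function.Injective f := by
    intro a b hab
    simp only [hf, Fin.mk.injEq] at hab
    exact Fin.val_injective (hnd.getElem_inj_iff.mp hab)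
  refine ⟨Equiv.ofBijective f (Finite.injective_iff_bijective.mp hinj), ?_⟩
  apply List.ext_get (by simp [toList, hlen])
  intro n h1 h2
  simp only [List.get_eq_getElem]
  rw [toList_get _ n (by simp [toList] at h1; omega)]
  rfl

end Transfer


end Cat231

/-- For every `N ≥ 1` and `0 ≤ k ≤ N-1`, the number of permutations of size `N`
that are 231-avoiding and `k`-winnable equals the Catalan number `C_{N-1}`
(independently of `k`). -/
theorem card_avoids231_winnable (N k : ℕ) (hN : 1 ≤ N) (hk : k ≤ N - 1) :
    Nat.card {p : Equiv.Perm (Fin N) // Avoids231 p ∧ Winnable N k p} =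
      catalan (N - 1) := by
  classical
  open Cat231 in
  rw [Nat.card_eq_fintype_card, Fintype.card_subtype]
  have hbij : (Finset.univ.filter
      (fun p : Equiv.Perm (Fin N) => Avoids231 p ∧ Winnable N k p)).card
      = (Cat231.T N k).card := by
    apply Finset.card_bij (fun p _ => Cat231.toList p)
    · intro p hp
      rw [Finset.mem_filter] at hp
      obtain ⟨-, hav, hwin⟩ := hp
      rw [Cat231.T, Finset.mem_filter]
      obtain ⟨h1, h2⟩ := (Cat231.winnable_iff p k hN).mp hwin
      exact ⟨Cat231.toList_mem_perms p, (Cat231.avoids_iff_avl p).mp hav, h1, h2⟩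
    · intro p hp q hq he
      ext i
      have h1 := Cat231.toList_get p i.1 i.isLt
      have h2 := Cat231.toList_get q i.1 i.isLt
      simp only [Fin.eta] at h1 h2
      rw [← h1, ← h2]
      exact List.getElem_of_eq he _
    · intro l hl
      rw [Cat231.T, Finset.mem_filter] at hl
      obtain ⟨hlp, hav, h1, h2⟩ := hl
      obtain ⟨p, rfl⟩ := Cat231.exists_perm hlp
      refine ⟨p, ?_, rfl⟩
      rw [Finset.mem_filter]
      exact ⟨Finset.mem_univ p, (Cat231.avoids_iff_avl p).mpr hav,
        (Cat231.winnable_iff p k hN).mpr ⟨h1, h2⟩⟩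
  rw [hbij, Cat231.card_T_catalan hN hk]
end

section
/- For a uniformly random 231-avoiding permutation of size N, the probability that any fixed k-positional strategy wins is C_{N-1}/C_N, and this probability tends to 1/4 as N → ∞. -/
namespace PW

open Equiv

variable {m n : ℕ}

def joinFun (A : Perm (Fin m)) (B : Perm (Fin n)) : Fin (m+1+n) → Fin (m+1+n) :=
  fun i => if h : (i:ℕ) < m then ⟨A ⟨i, h⟩, by have := (A ⟨i,h⟩).isLt; omega⟩
    else if h2 : (i:ℕ) = m then ⟨m+n, by omega⟩
    else ⟨m + (B ⟨(i:ℕ) - (m+1), by have := i.isLt; omega⟩ : Fin n), by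
      have := (B ⟨(i:ℕ) - (m+1), by have := i.isLt; omega⟩).isLt; omega⟩

def joinInvFun (A : Perm (Fin m)) (B : Perm (Fin n)) : Fin (m+1+n) → Fin (m+1+n) :=
  fun v => if h : (v:ℕ) < m then ⟨A.symm ⟨v, h⟩, by have := (A.symm ⟨v,h⟩).isLt; omega⟩
    else if h2 : (v:ℕ) = m + n then ⟨m, by omega⟩
    else ⟨m + 1 + (B.symm ⟨(v:ℕ) - m, by have := v.isLt; omega⟩ : Fin n), by
      have := (B.symm ⟨(v:ℕ) - m, by have := v.isLt; omega⟩).isLt; omega⟩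

lemma joinFun_lt (A : Perm (Fin m)) (B : Perm (Fin n)) (i : Fin (m+1+n)) (h : (i:ℕ) < m) :
    (joinFun A B i : ℕ) = (A ⟨i, h⟩ : ℕ) := by
  unfold joinFun; rw [dif_pos h]

lemma joinFun_eq (A : Perm (Fin m)) (B : Perm (Fin n)) (i : Fin (m+1+n)) (h : (i:ℕ) = m) :
    (joinFun A B i : ℕ) = m + n := by
  unfold joinFun; rw [dif_neg (by omega), dif_pos h]

lemma joinFun_gt (A : Perm (Fin m)) (B : Perm (Fin n)) (i : Fin (m+1+n)) (h : m < (i:ℕ)) :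
    (joinFun A B i : ℕ) = m + (B ⟨(i:ℕ) - (m+1), by have := i.isLt; omega⟩ : ℕ) := by
  unfold joinFun; rw [dif_neg (by omega), dif_neg (by omega)]

lemma joinInvFun_lt (A : Perm (Fin m)) (B : Perm (Fin n)) (v : Fin (m+1+n)) (h : (v:ℕ) < m) :
    (joinInvFun A B v : ℕ) = (A.symm ⟨v, h⟩ : ℕ) := by
  unfold joinInvFun; rw [dif_pos h]

lemma joinInvFun_eq (A : Perm (Fin m)) (B : Perm (Fin n)) (v : Fin (m+1+n)) (h : (v:ℕ) = m + n) :
    (joinInvFun A B v : ℕ) = m := by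
  unfold joinInvFun; rw [dif_neg (by omega), dif_pos h]

lemma joinInvFun_mid (A : Perm (Fin m)) (B : Perm (Fin n)) (v : Fin (m+1+n))
    (h : m ≤ (v:ℕ)) (h2 : (v:ℕ) < m + n) :
    (joinInvFun A B v : ℕ) = m + 1 + (B.symm ⟨(v:ℕ) - m, by omega⟩ : ℕ) := by
  unfold joinInvFun; rw [dif_neg (by omega), dif_neg (by omega)]

def join (A : Perm (Fin m)) (B : Perm (Fin n)) : Perm (Fin (m+1+n)) where
  toFun := joinFun A B
  invFun := joinInvFun A B
  left_inv := by
    intro i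
    apply Fin.ext
    rcases Nat.lt_trichotomy (i:ℕ) m with h | h | h
    · have hv : (joinFun A B i : ℕ) = (A ⟨i, h⟩ : ℕ) := joinFun_lt A B i h
      rw [joinInvFun_lt A B _ (by rw [hv]; exact (A ⟨i,h⟩).isLt)]
      have : (⟨(joinFun A B i : ℕ), by rw [hv]; exact (A ⟨i,h⟩).isLt⟩ : Fin m) = A ⟨i, h⟩ := by
        apply Fin.ext; simpa using hv
      rw [this, Equiv.symm_apply_apply]
    · rw [joinInvFun_eq A B _ (joinFun_eq A B i h)]; omega
    · have hi := i.isLt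
      set j : Fin n := ⟨(i:ℕ) - (m+1), by omega⟩ with hj
      have hBlt := (B j).isLt
      have hv : (joinFun A B i : ℕ) = m + (B j : ℕ) := joinFun_gt A B i h
      rw [joinInvFun_mid A B _ (by omega) (by omega)]
      have : (⟨(joinFun A B i : ℕ) - m, by omega⟩ : Fin n) = B j := by
        apply Fin.ext; simp [hv]
      rw [this, Equiv.symm_apply_apply]
      simp [hj]; omega
  right_inv := by
    intro v
    apply Fin.ext
    have hvlt := v.isLt
    rcases Nat.lt_trichotomy (v:ℕ) m with h | h | h
    · have hv : (joinInvFun A B v : ℕ) = (A.symm ⟨v, h⟩ : ℕ) := joinInvFun_lt A B v h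
      rw [joinFun_lt A B _ (by rw [hv]; exact (A.symm ⟨v,h⟩).isLt)]
      have : (⟨(joinInvFun A B v : ℕ), by rw [hv]; exact (A.symm ⟨v,h⟩).isLt⟩ : Fin m)
          = A.symm ⟨v, h⟩ := by
        apply Fin.ext; simpa using hv
      rw [this, Equiv.apply_symm_apply]
    · rcases Nat.lt_or_ge (v:ℕ) (m+n) with h2 | h2
      · -- v = m, m ≤ v < m+n : middle branch of inv
        have hv : (joinInvFun A B v : ℕ) = m + 1 + (B.symm ⟨(v:ℕ) - m, by omega⟩ : ℕ) :=
          joinInvFun_mid A B v (by omega) h2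
        have hBlt := (B.symm (⟨(v:ℕ) - m, by omega⟩ : Fin n)).isLt
        rw [joinFun_gt A B _ (by omega)]
        have : (⟨(joinInvFun A B v : ℕ) - (m+1), by omega⟩ : Fin n)
            = B.symm ⟨(v:ℕ) - m, by omega⟩ := by
          apply Fin.ext; simp [hv]
        rw [this, Equiv.apply_symm_apply]
        simp; omega
      · have h3 : (v:ℕ) = m + n := by omega
        have hv : (joinInvFun A B v : ℕ) = m := joinInvFun_eq A B v h3
        rw [joinFun_eq A B _ hv]; omega
    · rcases Nat.lt_or_ge (v:ℕ) (m+n) with h2 | h2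
      · have hv : (joinInvFun A B v : ℕ) = m + 1 + (B.symm ⟨(v:ℕ) - m, by omega⟩ : ℕ) :=
          joinInvFun_mid A B v (by omega) h2
        have hBlt := (B.symm (⟨(v:ℕ) - m, by omega⟩ : Fin n)).isLt
        rw [joinFun_gt A B _ (by omega)]
        have : (⟨(joinInvFun A B v : ℕ) - (m+1), by omega⟩ : Fin n)
            = B.symm ⟨(v:ℕ) - m, by omega⟩ := by
          apply Fin.ext; simp [hv]
        rw [this, Equiv.apply_symm_apply]
        simp; omega
      · have h3 : (v:ℕ) = m + n := by omega
        have hv : (joinInvFun A B v : ℕ) = m := joinInvFun_eq A B v h3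
        rw [joinFun_eq A B _ hv]; omega

lemma join_lt (A : Perm (Fin m)) (B : Perm (Fin n)) (i : Fin (m+1+n)) (h : (i:ℕ) < m) :
    (join A B i : ℕ) = (A ⟨i, h⟩ : ℕ) := joinFun_lt A B i h

lemma join_eq (A : Perm (Fin m)) (B : Perm (Fin n)) (i : Fin (m+1+n)) (h : (i:ℕ) = m) :
    (join A B i : ℕ) = m + n := joinFun_eq A B i h

lemma join_gt (A : Perm (Fin m)) (B : Perm (Fin n)) (i : Fin (m+1+n)) (h : m < (i:ℕ)) :
    (join A B i : ℕ) = m + (B ⟨(i:ℕ) - (m+1), by have := i.isLt; omega⟩ : ℕ) :=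
  joinFun_gt A B i h

end PW

namespace PW
open Equiv
variable {m n : ℕ}

lemma join_avoids_iff (A : Perm (Fin m)) (B : Perm (Fin n)) :
    Avoids231 (join A B) ↔ Avoids231 A ∧ Avoids231 B := by
  constructor
  · intro hp
    constructor
    · rintro ⟨i, j, l, hij, hjl, h1, h2⟩
      apply hp
      have hi := i.isLt; have hj := j.isLt; have hl := l.isLt
      have key : ∀ x : Fin m, (join A B ⟨(x:ℕ), by omega⟩ : ℕ) = (A x : ℕ) := by
        intro x
        rw [join_lt A B _ (x.isLt : ((⟨(x:ℕ), by omega⟩ : Fin (m+1+n)) : ℕ) < m)]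
      refine ⟨⟨i, by omega⟩, ⟨j, by omega⟩, ⟨l, by omega⟩, hij, hjl, ?_, ?_⟩
      · rw [Fin.lt_def, key i, key l]; exact h1
      · rw [Fin.lt_def, key i, key j]; exact h2
    · rintro ⟨i, j, l, hij, hjl, h1, h2⟩
      apply hp
      have hi := i.isLt; have hj := j.isLt; have hl := l.isLt
      have key : ∀ x : Fin n, (join A B ⟨m+1+(x:ℕ), by omega⟩ : ℕ) = m + (B x : ℕ) := by
        intro x
        have hx : m < ((⟨m+1+(x:ℕ), by omega⟩ : Fin (m+1+n)) : ℕ) := by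
          show m < m+1+(x:ℕ); omega
        rw [join_gt A B _ hx]
        exact congrArg (fun t : Fin n => m + ((B t : Fin n) : ℕ))
          (Fin.ext (show m+1+(x:ℕ)-(m+1) = (x:ℕ) by omega))
      refine ⟨⟨m+1+i, by omega⟩, ⟨m+1+j, by omega⟩, ⟨m+1+l, by omega⟩,
        by rw [Fin.lt_def]; exact Nat.add_lt_add_left hij _,
        by rw [Fin.lt_def]; exact Nat.add_lt_add_left hjl _, ?_, ?_⟩
      · rw [Fin.lt_def, key i, key l]; exact Nat.add_lt_add_left h1 _
      · rw [Fin.lt_def, key i, key j]; exact Nat.add_lt_add_left h2 _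
  · rintro ⟨hA, hB⟩ ⟨i, j, l, hij, hjl, h1, h2⟩
    rw [Fin.lt_def] at hij hjl h1 h2
    have hi := i.isLt; have hj := j.isLt; have hl := l.isLt
    rcases Nat.lt_trichotomy (l:ℕ) m with hlm | hlm | hlm
    · have him : (i:ℕ) < m := by omega
      have hjm : (j:ℕ) < m := by omega
      rw [join_lt A B i him, join_lt A B l hlm] at h1
      rw [join_lt A B i him, join_lt A B j hjm] at h2
      exact hA ⟨⟨i, him⟩, ⟨j, hjm⟩, ⟨l, hlm⟩, hij, hjl, h1, h2⟩
    · rw [join_eq A B l hlm] at h1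
      have := (join A B i).isLt; omega
    · have hplval : m ≤ (join A B l : ℕ) := by
        rw [join_gt A B l hlm]; omega
      rcases Nat.lt_trichotomy (i:ℕ) m with him | him | him
      · rw [join_lt A B i him] at h1
        have := (A ⟨i, him⟩).isLt; omega
      · rw [join_eq A B i him] at h2
        have := (join A B j).isLt; omega
      · have hjm : m < (j:ℕ) := by omega
        rw [join_gt A B i him, join_gt A B l hlm] at h1
        rw [join_gt A B i him, join_gt A B j hjm] at h2
        refine hB ⟨⟨(i:ℕ)-(m+1), by omega⟩, ⟨(j:ℕ)-(m+1), by omega⟩, ⟨(l:ℕ)-(m+1), by omega⟩,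
          by rw [Fin.lt_def]; exact Nat.sub_lt_sub_right (by omega) hij,
          by rw [Fin.lt_def]; exact Nat.sub_lt_sub_right (by omega) hjl,
          by rw [Fin.lt_def]; omega, by rw [Fin.lt_def]; omega⟩

lemma join_ltrmax_iff_lt (A : Perm (Fin m)) (B : Perm (Fin n)) (j : Fin (m+1+n))
    (h : (j:ℕ) < m) : IsLTRMax (join A B) j ↔ IsLTRMax A ⟨j, h⟩ := by
  have key : ∀ (x : Fin (m+1+n)) (hx : (x:ℕ) < m), (join A B x : ℕ) = (A ⟨x, hx⟩ : ℕ) :=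
    fun x hx => join_lt A B x hx
  constructor
  · intro hl i hi
    rw [Fin.lt_def] at hi
    have := hl ⟨i, by omega⟩ (by rw [Fin.lt_def]; exact hi)
    rw [Fin.lt_def, key _ (show ((⟨(i:ℕ), by omega⟩ : Fin (m+1+n)) : ℕ) < m from i.isLt),
      key j h] at this
    rw [Fin.lt_def]
    simpa using this
  · intro hl i hi
    rw [Fin.lt_def] at hi
    have him : (i:ℕ) < m := by omega
    have := hl ⟨i, him⟩ (by rw [Fin.lt_def]; exact hi)
    rw [Fin.lt_def] at this ⊢
    rw [key i him, key j h]
    exact this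

lemma join_ltrmax_mid (A : Perm (Fin m)) (B : Perm (Fin n)) (j : Fin (m+1+n))
    (h : (j:ℕ) = m) : IsLTRMax (join A B) j := by
  intro i hi
  rw [Fin.lt_def] at hi ⊢
  rw [join_eq A B j h, join_lt A B i (by omega)]
  have := (A ⟨i, by omega⟩).isLt; omega

lemma join_not_ltrmax_gt (A : Perm (Fin m)) (B : Perm (Fin n)) (j : Fin (m+1+n))
    (h : m < (j:ℕ)) : ¬ IsLTRMax (join A B) j := by
  intro hl
  have hj := j.isLt
  have := hl ⟨m, by omega⟩ (by rw [Fin.lt_def]; exact h)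
  rw [Fin.lt_def] at this
  rw [join_eq A B _ rfl, join_gt A B j h] at this
  have := (B ⟨(j:ℕ)-(m+1), by omega⟩).isLt; omega

lemma join_winnable_iff (A : Perm (Fin m)) (B : Perm (Fin n)) (k : ℕ) :
    Winnable (m+1+n) k (join A B) ↔ (k ≤ m ∧ ∀ j : Fin m, IsLTRMax A j → (j:ℕ) < k) := by
  constructor
  · rintro ⟨j, hkj, hltr, hmin, hval⟩
    have hjm : (j:ℕ) = m := by
      rcases Nat.lt_trichotomy (j:ℕ) m with h | h | h
      · rw [join_lt A B j h] at hval
        have := (A ⟨j, h⟩).isLt; omega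
      · exact h
      · exact absurd hltr (join_not_ltrmax_gt A B j h)
    refine ⟨by omega, ?_⟩
    intro j' hj'
    by_contra hge
    push_neg at hge
    have hj'2 := j'.isLt
    have hlift : IsLTRMax (join A B) ⟨(j':ℕ), by omega⟩ :=
      (join_ltrmax_iff_lt A B ⟨(j':ℕ), by omega⟩ j'.isLt).mpr (by simpa using hj')
    have := hmin ⟨(j':ℕ), by omega⟩ hge hlift
    rw [Fin.le_def] at this
    simp only at this
    omega
  · rintro ⟨hkm, hA⟩
    refine ⟨⟨m, by omega⟩, hkm, join_ltrmax_mid A B _ rfl, ?_, ?_⟩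
    · intro i hki hltr
      rw [Fin.le_def]
      show m ≤ (i:ℕ)
      rcases Nat.lt_trichotomy (i:ℕ) m with h | h | h
      · have h2 : (i:ℕ) < k := hA ⟨i, h⟩ ((join_ltrmax_iff_lt A B i h).mp hltr)
        omega
      · omega
      · omega
    · show (join A B ⟨m, _⟩ : ℕ) = m + 1 + n - 1
      rw [join_eq A B _ rfl]; omega
end PW

namespace PW
open Equiv Finset
variable {m n : ℕ}

lemma card_filter_val_lt (N m : ℕ) (hm : m ≤ N) :
    (Finset.univ.filter (fun v : Fin N => (v:ℕ) < m)).card = m := by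
  have : Finset.univ.filter (fun v : Fin N => (v:ℕ) < m)
      = Finset.map ⟨Fin.castLE hm, Fin.castLE_injective hm⟩ Finset.univ := by
    ext v
    simp only [mem_filter, mem_univ, true_and, mem_map, Function.Embedding.coeFn_mk]
    constructor
    · intro hv; exact ⟨⟨v, hv⟩, Fin.ext rfl⟩
    · rintro ⟨x, rfl⟩; exact x.isLt
  rw [this, Finset.card_map, Finset.card_univ, Fintype.card_fin]

lemma card_filter_apply_lt (N : ℕ) (p : Perm (Fin N)) (m : ℕ) (hm : m ≤ N) :
    (Finset.univ.filter (fun l : Fin N => (p l : ℕ) < m)).card = m := by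
  have himg : (Finset.univ.filter (fun l : Fin N => (p l : ℕ) < m)).image p
      = Finset.univ.filter (fun v : Fin N => (v:ℕ) < m) := by
    ext v
    simp only [mem_image, mem_filter, mem_univ, true_and]
    constructor
    · rintro ⟨l, hl, rfl⟩; exact hl
    · intro hv; exact ⟨p.symm v, by simpa using hv, by simp⟩
  have := Finset.card_image_of_injective
    (Finset.univ.filter (fun l : Fin N => (p l : ℕ) < m)) p.injective
  rw [himg, card_filter_val_lt N m hm] at this
  omega

-- structure of an avoiding permutation with max at position m
lemma vals_lt (p : Perm (Fin (m+1+n))) (hav : Avoids231 p)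
    (hmax : (p ⟨m, by omega⟩ : ℕ) = m + n) :
    ∀ i : Fin (m+1+n), (i:ℕ) < m → (p i : ℕ) < m := by
  by_contra hcon
  push_neg at hcon
  obtain ⟨i₀, hi₀, hpi₀⟩ := hcon
  set S := Finset.univ.filter (fun l : Fin (m+1+n) => (p l : ℕ) < m) with hS
  have hcardS : S.card = m := card_filter_apply_lt _ p m (by omega)
  have hsub : S ⊆ (Finset.univ.filter (fun v : Fin (m+1+n) => (v:ℕ) < m)).erase i₀ := by
    intro l hl
    rw [hS, mem_filter] at hl
    have hplm : (p l : ℕ) < m := hl.2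
    have hlne : l ≠ i₀ := by
      intro h; rw [h] at hplm; omega
    have hlm : (l:ℕ) < m := by
      by_contra hge
      push_neg at hge
      have hlnem : (l:ℕ) ≠ m := by
        intro h
        have : l = ⟨m, by omega⟩ := Fin.ext h
        rw [this, hmax] at hplm; omega
      have hlgt : m < (l:ℕ) := by omega
      -- pattern (i₀, ⟨m⟩, l)
      apply hav
      refine ⟨i₀, ⟨m, by omega⟩, l, ?_, ?_, ?_, ?_⟩
      · rw [Fin.lt_def]; exact hi₀
      · rw [Fin.lt_def]; exact hlgt
      · rw [Fin.lt_def]; omega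
      · rw [Fin.lt_def, hmax]
        have h1 : (p i₀ : ℕ) ≤ m + n := by have := (p i₀).isLt; omega
        have h2 : (p i₀ : ℕ) ≠ m + n := by
          intro h
          have : p i₀ = p ⟨m, by omega⟩ := Fin.ext (by rw [hmax]; exact h)
          have := p.injective this
          rw [this] at hi₀
          simp at hi₀
        omega
    exact Finset.mem_erase.mpr ⟨hlne, by simp [hlm]⟩
  have hle := Finset.card_le_card hsub
  rw [hcardS, Finset.card_erase_of_mem (by simp [hi₀]), card_filter_val_lt _ m (by omega)] at hle
  omega

lemma vals_ge (p : Perm (Fin (m+1+n))) (hav : Avoids231 p)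
    (hmax : (p ⟨m, by omega⟩ : ℕ) = m + n) :
    ∀ i : Fin (m+1+n), m < (i:ℕ) → m ≤ (p i : ℕ) ∧ (p i : ℕ) < m + n := by
  intro l hl
  have hne : (p l : ℕ) ≠ m + n := by
    intro h
    have : p l = p ⟨m, by omega⟩ := Fin.ext (by rw [hmax]; exact h)
    have := p.injective this
    rw [this] at hl; simp at hl
  have hlt : (p l : ℕ) < m + n := by have := (p l).isLt; omega
  refine ⟨?_, hlt⟩
  by_contra hge
  push_neg at hge
  set S := Finset.univ.filter (fun x : Fin (m+1+n) => (p x : ℕ) < m) with hS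
  have hcardS : S.card = m := card_filter_apply_lt _ p m (by omega)
  have hsub : insert l (Finset.univ.filter (fun v : Fin (m+1+n) => (v:ℕ) < m)) ⊆ S := by
    intro x hx
    rcases Finset.mem_insert.mp hx with rfl | hx
    · rw [hS, mem_filter]; exact ⟨by simp, hge⟩
    · rw [mem_filter] at hx
      rw [hS, mem_filter]
      exact ⟨by simp, vals_lt p hav hmax x hx.2⟩
  have hle := Finset.card_le_card hsub
  rw [Finset.card_insert_of_notMem (by simp; omega), card_filter_val_lt _ m (by omega),
    hcardS] at hle
  omega

end PW

namespace PW
open Equiv Finset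
variable {m n : ℕ}

lemma pos_ne_m (p : Perm (Fin (m+1+n))) (hmax : (p ⟨m, by omega⟩ : ℕ) = m + n)
    (pos : Fin (m+1+n)) (hval : (p pos : ℕ) < m + n) : (pos:ℕ) ≠ m := by
  intro h
  have h2 : p pos = p ⟨m, by omega⟩ := congrArg p (Fin.ext h)
  have h3 : (p pos : ℕ) = m + n := by rw [h2]; exact hmax
  omega

lemma symm_lt (p : Perm (Fin (m+1+n))) (hav : Avoids231 p)
    (hmax : (p ⟨m, by omega⟩ : ℕ) = m + n)
    (w : Fin (m+1+n)) (hw : (w:ℕ) < m) : (p.symm w : ℕ) < m := by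
  set pos := p.symm w with hpos
  have happ : p pos = w := p.apply_symm_apply w
  have hval : (p pos : ℕ) < m := by rw [happ]; exact hw
  by_contra hge
  push_neg at hge
  have hne : (pos:ℕ) ≠ m := pos_ne_m p hmax pos (by omega)
  have := (vals_ge p hav hmax pos (by omega)).1
  omega

lemma symm_mid (p : Perm (Fin (m+1+n))) (hav : Avoids231 p)
    (hmax : (p ⟨m, by omega⟩ : ℕ) = m + n)
    (w : Fin (m+1+n)) (hw1 : m ≤ (w:ℕ)) (hw2 : (w:ℕ) < m + n) : m < (p.symm w : ℕ) := by
  set pos := p.symm w with hpos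
  have happ : p pos = w := p.apply_symm_apply w
  have hval : (p pos : ℕ) < m + n := by rw [happ]; exact hw2
  have hne : (pos:ℕ) ≠ m := pos_ne_m p hmax pos hval
  by_contra hle
  push_neg at hle
  have hlt : (pos:ℕ) < m := by omega
  have := vals_lt p hav hmax pos hlt
  rw [happ] at this
  omega

def splitA (p : Perm (Fin (m+1+n))) (hav : Avoids231 p)
    (hmax : (p ⟨m, by omega⟩ : ℕ) = m + n) : Perm (Fin m) where
  toFun i := ⟨p ⟨i, by omega⟩, vals_lt p hav hmax ⟨i, by omega⟩ i.isLt⟩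
  invFun v := ⟨p.symm ⟨v, by omega⟩, symm_lt p hav hmax ⟨v, by omega⟩ v.isLt⟩
  left_inv := by
    intro i
    apply Fin.ext
    show ((p.symm ⟨((p ⟨(i:ℕ), by omega⟩ : Fin (m+1+n)) : ℕ), _⟩ : Fin (m+1+n)) : ℕ) = (i:ℕ)
    have h1 : (⟨((p ⟨(i:ℕ), by omega⟩ : Fin (m+1+n)) : ℕ), by
        exact (p ⟨(i:ℕ), by omega⟩).isLt⟩ : Fin (m+1+n)) = p ⟨(i:ℕ), by omega⟩ := Fin.ext rfl
    rw [h1, Equiv.symm_apply_apply]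
  right_inv := by
    intro v
    apply Fin.ext
    show ((p ⟨((p.symm ⟨(v:ℕ), by omega⟩ : Fin (m+1+n)) : ℕ), _⟩ : Fin (m+1+n)) : ℕ) = (v:ℕ)
    have h1 : (⟨((p.symm ⟨(v:ℕ), by omega⟩ : Fin (m+1+n)) : ℕ), by
        exact (p.symm ⟨(v:ℕ), by omega⟩).isLt⟩ : Fin (m+1+n)) = p.symm ⟨(v:ℕ), by omega⟩ :=
      Fin.ext rfl
    rw [h1, Equiv.apply_symm_apply]

def splitB (p : Perm (Fin (m+1+n))) (hav : Avoids231 p)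
    (hmax : (p ⟨m, by omega⟩ : ℕ) = m + n) : Perm (Fin n) where
  toFun j := ⟨(p ⟨m+1+j, by omega⟩ : ℕ) - m, by
    have := vals_ge p hav hmax ⟨m+1+j, by omega⟩ (by show m < m+1+(j:ℕ); omega)
    omega⟩
  invFun v := ⟨(p.symm ⟨m + v, by have := v.isLt; omega⟩ : ℕ) - (m+1), by
    have h1 := symm_mid p hav hmax ⟨m + v, by have := v.isLt; omega⟩
      (by show m ≤ m + (v:ℕ); omega) (by show m + (v:ℕ) < m + n; have := v.isLt; omega)
    have h2 := (p.symm (⟨m + v, by have := v.isLt; omega⟩ : Fin (m+1+n))).isLt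
    omega⟩
  left_inv := by
    intro j
    apply Fin.ext
    have hj := j.isLt
    have hval := vals_ge p hav hmax ⟨m+1+j, by omega⟩ (by show m < m+1+(j:ℕ); omega)
    show ((p.symm ⟨m + ((p ⟨m+1+(j:ℕ), by omega⟩ : ℕ) - m), _⟩ : Fin (m+1+n)) : ℕ) - (m+1)
      = (j:ℕ)
    have h1 : (⟨m + ((p ⟨m+1+(j:ℕ), by omega⟩ : ℕ) - m), by
        have := (p ⟨m+1+(j:ℕ), by omega⟩).isLt; omega⟩ : Fin (m+1+n))
        = p ⟨m+1+(j:ℕ), by omega⟩ := Fin.ext (by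
          show m + ((p ⟨m+1+(j:ℕ), by omega⟩ : ℕ) - m) = (p ⟨m+1+(j:ℕ), by omega⟩ : ℕ)
          omega)
    rw [h1, Equiv.symm_apply_apply]
    show m+1+(j:ℕ) - (m+1) = (j:ℕ)
    omega
  right_inv := by
    intro v
    apply Fin.ext
    have hv := v.isLt
    have h1 := symm_mid p hav hmax ⟨m + v, by omega⟩
      (by show m ≤ m + (v:ℕ); omega) (by show m + (v:ℕ) < m + n; omega)
    have h2 := (p.symm (⟨m + v, by omega⟩ : Fin (m+1+n))).isLt
    show (p ⟨m+1+(((p.symm ⟨m + (v:ℕ), by omega⟩ : Fin (m+1+n)) : ℕ) - (m+1)), _⟩ : ℕ) - m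
      = (v:ℕ)
    have h3 : (⟨m+1+(((p.symm ⟨m + (v:ℕ), by omega⟩ : Fin (m+1+n)) : ℕ) - (m+1)), by
        omega⟩ : Fin (m+1+n)) = p.symm ⟨m + (v:ℕ), by omega⟩ := Fin.ext (by
          show m+1+(((p.symm ⟨m + (v:ℕ), by omega⟩ : Fin (m+1+n)) : ℕ) - (m+1))
            = ((p.symm ⟨m + (v:ℕ), by omega⟩ : Fin (m+1+n)) : ℕ)
          omega)
    rw [h3, Equiv.apply_symm_apply]
    show m + (v:ℕ) - m = (v:ℕ)
    omega

lemma join_split (p : Perm (Fin (m+1+n))) (hav : Avoids231 p)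
    (hmax : (p ⟨m, by omega⟩ : ℕ) = m + n) :
    join (splitA p hav hmax) (splitB p hav hmax) = p := by
  apply Equiv.ext
  intro i
  apply Fin.ext
  rcases Nat.lt_trichotomy (i:ℕ) m with h | h | h
  · rw [join_lt _ _ i h]
    show ((p ⟨(i:ℕ), by omega⟩ : Fin (m+1+n)) : ℕ) = (p i : ℕ)
    exact congrArg (fun x => ((p x : Fin (m+1+n)) : ℕ)) (Fin.ext rfl)
  · rw [join_eq _ _ i h, ← hmax]
    exact (congrArg (fun x => ((p x : Fin (m+1+n)) : ℕ)) (Fin.ext h)).symm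
  · have hi := i.isLt
    rw [join_gt _ _ i h]
    show m + ((p ⟨m+1+((i:ℕ)-(m+1)), by omega⟩ : ℕ) - m) = (p i : ℕ)
    have h1 : (⟨m+1+((i:ℕ)-(m+1)), by omega⟩ : Fin (m+1+n)) = i :=
      Fin.ext (by show m+1+((i:ℕ)-(m+1)) = (i:ℕ); omega)
    rw [h1]
    have := vals_ge p hav hmax i h
    omega

end PW

namespace PW
open Equiv Finset
variable {m n : ℕ}

lemma join_inj {A A' : Perm (Fin m)} {B B' : Perm (Fin n)}
    (h : join A B = join A' B') : A = A' ∧ B = B' := by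
  constructor
  · apply Equiv.ext
    intro i
    apply Fin.ext
    have key : ((join A B ⟨(i:ℕ), by omega⟩ : Fin (m+1+n)) : ℕ)
        = ((join A' B' ⟨(i:ℕ), by omega⟩ : Fin (m+1+n)) : ℕ) :=
      congrArg (fun q : Perm (Fin (m+1+n)) => ((q ⟨(i:ℕ), by omega⟩ : Fin (m+1+n)) : ℕ)) h
    have h1 := join_lt A B ⟨(i:ℕ), by omega⟩ i.isLt
    have h2 := join_lt A' B' ⟨(i:ℕ), by omega⟩ i.isLt
    exact (h1.symm.trans (key.trans h2) :)
  · apply Equiv.ext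
    intro j
    apply Fin.ext
    have hj := j.isLt
    have hgt : m < ((⟨m+1+(j:ℕ), by omega⟩ : Fin (m+1+n)) : ℕ) := by
      show m < m+1+(j:ℕ); omega
    have key : ((join A B ⟨m+1+(j:ℕ), by omega⟩ : Fin (m+1+n)) : ℕ)
        = ((join A' B' ⟨m+1+(j:ℕ), by omega⟩ : Fin (m+1+n)) : ℕ) :=
      congrArg (fun q : Perm (Fin (m+1+n)) => ((q ⟨m+1+(j:ℕ), by omega⟩ : Fin (m+1+n)) : ℕ)) h
    have e1 : (⟨((⟨m+1+(j:ℕ), by omega⟩ : Fin (m+1+n)) : ℕ) - (m+1), by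
        show m+1+(j:ℕ) - (m+1) < n; omega⟩ : Fin n) = j := Fin.ext (by
          show m+1+(j:ℕ) - (m+1) = (j:ℕ); omega)
    have h1 : ((join A B ⟨m+1+(j:ℕ), by omega⟩ : Fin (m+1+n)) : ℕ) = m + (B j : ℕ) :=
      (join_gt A B ⟨m+1+(j:ℕ), by omega⟩ hgt).trans (by rw [e1])
    have h2 : ((join A' B' ⟨m+1+(j:ℕ), by omega⟩ : Fin (m+1+n)) : ℕ) = m + (B' j : ℕ) :=
      (join_gt A' B' ⟨m+1+(j:ℕ), by omega⟩ hgt).trans (by rw [e1])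
    have := h1.symm.trans (key.trans h2)
    omega

def card1Equiv :
    {p : Perm (Fin (m+1+n)) // Avoids231 p ∧ ((p ⟨m, by omega⟩ : Fin (m+1+n)) : ℕ) = m + n}
      ≃ {A : Perm (Fin m) // Avoids231 A} × {B : Perm (Fin n) // Avoids231 B} where
  toFun q :=
    have hA := (join_avoids_iff (splitA q.1 q.2.1 q.2.2) (splitB q.1 q.2.1 q.2.2)).mp
      (by rw [join_split q.1 q.2.1 q.2.2]; exact q.2.1)
    (⟨splitA q.1 q.2.1 q.2.2, hA.1⟩, ⟨splitB q.1 q.2.1 q.2.2, hA.2⟩)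
  invFun x := ⟨join x.1.1 x.2.1, (join_avoids_iff _ _).mpr ⟨x.1.2, x.2.2⟩, join_eq _ _ _ rfl⟩
  left_inv q := Subtype.ext (join_split q.1 q.2.1 q.2.2)
  right_inv x := by
    obtain ⟨⟨A, hA⟩, ⟨B, hB⟩⟩ := x
    have hav : Avoids231 (join A B) := (join_avoids_iff _ _).mpr ⟨hA, hB⟩
    have hmax : ((join A B ⟨m, by omega⟩ : Fin (m+1+n)) : ℕ) = m + n := join_eq _ _ _ rfl
    have h := join_split (join A B) hav hmax
    obtain ⟨h1, h2⟩ := join_inj h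
    exact Prod.ext (Subtype.ext h1) (Subtype.ext h2)

def card2Equiv (k : ℕ) (hk : k ≤ m) :
    {p : Perm (Fin (m+1+n)) //
      (Avoids231 p ∧ ((p ⟨m, by omega⟩ : Fin (m+1+n)) : ℕ) = m + n) ∧ Winnable (m+1+n) k p}
      ≃ {A : Perm (Fin m) // Avoids231 A ∧ ∀ j : Fin m, IsLTRMax A j → (j:ℕ) < k}
          × {B : Perm (Fin n) // Avoids231 B} where
  toFun q :=
    have hA := (join_avoids_iff (splitA q.1 q.2.1.1 q.2.1.2) (splitB q.1 q.2.1.1 q.2.1.2)).mp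
      (by rw [join_split q.1 q.2.1.1 q.2.1.2]; exact q.2.1.1)
    have hW := (join_winnable_iff (splitA q.1 q.2.1.1 q.2.1.2) (splitB q.1 q.2.1.1 q.2.1.2) k).mp
      (by rw [join_split q.1 q.2.1.1 q.2.1.2]; exact q.2.2)
    (⟨splitA q.1 q.2.1.1 q.2.1.2, hA.1, hW.2⟩, ⟨splitB q.1 q.2.1.1 q.2.1.2, hA.2⟩)
  invFun x := ⟨join x.1.1 x.2.1,
    ⟨(join_avoids_iff _ _).mpr ⟨x.1.2.1, x.2.2⟩, join_eq _ _ _ rfl⟩,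
    (join_winnable_iff _ _ k).mpr ⟨hk, x.1.2.2⟩⟩
  left_inv q := Subtype.ext (join_split q.1 q.2.1.1 q.2.1.2)
  right_inv x := by
    obtain ⟨⟨A, hA⟩, ⟨B, hB⟩⟩ := x
    have hav : Avoids231 (join A B) := (join_avoids_iff _ _).mpr ⟨hA.1, hB⟩
    have hmax : ((join A B ⟨m, by omega⟩ : Fin (m+1+n)) : ℕ) = m + n := join_eq _ _ _ rfl
    have h := join_split (join A B) hav hmax
    obtain ⟨h1, h2⟩ := join_inj h
    exact Prod.ext (Subtype.ext h1) (Subtype.ext h2)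

end PW

namespace PW
open Equiv Finset
variable {m n : ℕ}

noncomputable def fcard (N : ℕ) : ℕ := Nat.card {p : Perm (Fin N) // Avoids231 p}

noncomputable def hcard (mz k : ℕ) : ℕ :=
  Nat.card {A : Perm (Fin mz) // Avoids231 A ∧ ∀ j : Fin mz, IsLTRMax A j → (j:ℕ) < k}

noncomputable def gcard (N k : ℕ) : ℕ := Nat.card {p : Perm (Fin N) // Avoids231 p ∧ Winnable N k p}

lemma card1 : Nat.card {p : Perm (Fin (m+1+n)) //
      Avoids231 p ∧ ((p ⟨m, by omega⟩ : Fin (m+1+n)) : ℕ) = m + n} = fcard m * fcard n := by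
  rw [Nat.card_congr card1Equiv, Nat.card_prod]; rfl

lemma card2 (k : ℕ) (hk : k ≤ m) : Nat.card {p : Perm (Fin (m+1+n)) //
      (Avoids231 p ∧ ((p ⟨m, by omega⟩ : Fin (m+1+n)) : ℕ) = m + n) ∧ Winnable (m+1+n) k p}
      = hcard m k * fcard n := by
  rw [Nat.card_congr (card2Equiv k hk), Nat.card_prod]; rfl

lemma nat_card_sigma {ι : Type*} [Fintype ι] (f : ι → Type*) [∀ i, Finite (f i)] :
    Nat.card ((i : ι) × f i) = ∑ i, Nat.card (f i) := by
  classical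
  letI : ∀ i, Fintype (f i) := fun i => Fintype.ofFinite (f i)
  simp [Nat.card_eq_fintype_card, Fintype.card_sigma]

lemma card_partition (N : ℕ) (P : Perm (Fin (N+1)) → Prop) :
    Nat.card {p : Perm (Fin (N+1)) // P p}
      = ∑ mm : Fin (N+1), Nat.card {p : Perm (Fin (N+1)) // P p ∧ ((p mm : Fin (N+1)) : ℕ) = N} := by
  rw [Nat.card_congr (Equiv.sigmaFiberEquiv
    (fun q : {p : Perm (Fin (N+1)) // P p} => q.1.symm (Fin.last N))).symm]
  rw [nat_card_sigma]
  apply Finset.sum_congr rfl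
  intro mm _
  apply Nat.card_congr
  refine (Equiv.subtypeSubtypeEquivSubtypeInter P
    (fun p => p.symm (Fin.last N) = mm)).trans (Equiv.subtypeEquivRight fun p => ?_)
  constructor
  · rintro ⟨hp, hs⟩
    refine ⟨hp, ?_⟩
    rw [← hs, Equiv.apply_symm_apply]
    rfl
  · rintro ⟨hp, hv⟩
    refine ⟨hp, ?_⟩
    have h1 : p mm = Fin.last N := Fin.ext (by rw [hv]; rfl)
    exact (Equiv.symm_apply_eq p).mpr h1.symm

lemma maxpos_ltrmax {N : ℕ} (p : Perm (Fin (N+1))) (mm : Fin (N+1))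
    (hv : ((p mm : Fin (N+1)) : ℕ) = N) : IsLTRMax p mm := by
  intro i hi
  rw [Fin.lt_def, hv]
  have h1 := (p i).isLt
  have h2 : p i ≠ p mm := fun h => absurd (p.injective h) (Fin.ne_of_lt hi)
  have h3 : (p i : ℕ) ≠ N := by
    intro h; exact h2 (Fin.ext (by rw [h, hv]))
  omega

lemma ltr_le_maxpos {N : ℕ} (p : Perm (Fin (N+1))) (mm : Fin (N+1))
    (hv : ((p mm : Fin (N+1)) : ℕ) = N) (j : Fin (N+1)) (hj : IsLTRMax p j) : j ≤ mm := by
  by_contra h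
  push_neg at h
  have := hj mm h
  rw [Fin.lt_def, hv] at this
  have := (p j).isLt
  omega

lemma win_maxpos {N k : ℕ} (p : Perm (Fin (N+1))) (mm : Fin (N+1))
    (hv : ((p mm : Fin (N+1)) : ℕ) = N) (hw : Winnable (N+1) k p) : k ≤ (mm:ℕ) := by
  obtain ⟨j, hkj, hltr, hmin, hval⟩ := hw
  have : j = mm := p.injective (Fin.ext (by rw [hv]; simpa using hval))
  rw [this] at hkj
  exact hkj

end PW

namespace PW
open Equiv Finset
variable {m n : ℕ}

lemma fcard_zero : fcard 0 = 1 := by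
  rw [fcard, Nat.card_congr (Equiv.subtypeUnivEquiv (fun p : Perm (Fin 0) => by
    rintro ⟨i, -⟩; exact i.elim0))]
  rw [Nat.card_eq_fintype_card, Fintype.card_perm]
  simp

lemma hcard_zero (k : ℕ) : hcard 0 k = 1 := by
  rw [hcard, Nat.card_congr (Equiv.subtypeUnivEquiv (fun p : Perm (Fin 0) =>
    ⟨by rintro ⟨i, -⟩; exact i.elim0, fun j => j.elim0⟩))]
  rw [Nat.card_eq_fintype_card, Fintype.card_perm]
  simp

lemma card1' (N mz d : ℕ) (hN : N = mz + 1 + d) (hm : mz < N) :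
    Nat.card {p : Perm (Fin N) // Avoids231 p ∧ ((p ⟨mz, hm⟩ : Fin N) : ℕ) = N - 1}
      = fcard mz * fcard d := by
  subst hN
  have hiff : ∀ p : Perm (Fin (mz+1+d)),
      (Avoids231 p ∧ ((p ⟨mz, hm⟩ : Fin (mz+1+d)) : ℕ) = mz+1+d-1)
        ↔ (Avoids231 p ∧ ((p ⟨mz, hm⟩ : Fin (mz+1+d)) : ℕ) = mz + d) := by
    intro p
    rw [show mz+1+d-1 = mz+d from by omega]
  rw [Nat.card_congr (Equiv.subtypeEquivRight hiff)]
  exact card1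

lemma card2' (N mz d k : ℕ) (hN : N = mz + 1 + d) (hm : mz < N) (hk : k ≤ mz) :
    Nat.card {p : Perm (Fin N) //
        (Avoids231 p ∧ Winnable N k p) ∧ ((p ⟨mz, hm⟩ : Fin N) : ℕ) = N - 1}
      = hcard mz k * fcard d := by
  subst hN
  have hiff : ∀ p : Perm (Fin (mz+1+d)),
      ((Avoids231 p ∧ Winnable (mz+1+d) k p) ∧ ((p ⟨mz, hm⟩ : Fin (mz+1+d)) : ℕ) = mz+1+d-1)
        ↔ ((Avoids231 p ∧ ((p ⟨mz, hm⟩ : Fin (mz+1+d)) : ℕ) = mz + d)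
            ∧ Winnable (mz+1+d) k p) := by
    intro p
    rw [show mz+1+d-1 = mz+d from by omega]
    tauto
  rw [Nat.card_congr (Equiv.subtypeEquivRight hiff)]
  exact card2 k hk

lemma fcard_succ (N : ℕ) : fcard (N+1) = ∑ mm : Fin (N+1), fcard mm * fcard (N - mm) := by
  rw [fcard, card_partition N Avoids231]
  apply Finset.sum_congr rfl
  intro mm _
  exact card1' (N+1) mm (N - mm) (by omega) mm.isLt

lemma fcard_eq (N : ℕ) : fcard N = catalan N := by
  induction N using Nat.strong_induction_on with
  | _ N ih =>
    match N, ih with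
    | 0, _ => rw [fcard_zero, catalan_zero]
    | (N+1), ih =>
      rw [fcard_succ, catalan_succ]
      apply Finset.sum_congr rfl
      intro mm _
      rw [ih mm (by omega), ih (N - mm) (by omega)]

lemma hcard_succ (mz k : ℕ) : hcard (mz+1) k
    = ∑ aa : Fin (mz+1), if (aa:ℕ) < k then fcard aa * fcard (mz - aa) else 0 := by
  rw [hcard, card_partition mz
    (fun A : Perm (Fin (mz+1)) => Avoids231 A ∧ ∀ j : Fin (mz+1), IsLTRMax A j → (j:ℕ) < k)]
  apply Finset.sum_congr rfl
  intro aa _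
  by_cases hak : (aa:ℕ) < k
  · rw [if_pos hak]
    have hiff : ∀ A : Perm (Fin (mz+1)),
        ((Avoids231 A ∧ ∀ j : Fin (mz+1), IsLTRMax A j → (j:ℕ) < k)
          ∧ ((A aa : Fin (mz+1)) : ℕ) = mz)
        ↔ (Avoids231 A ∧ ((A aa : Fin (mz+1)) : ℕ) = mz) := by
      intro A
      constructor
      · rintro ⟨⟨h1, _⟩, h3⟩; exact ⟨h1, h3⟩
      · rintro ⟨h1, h3⟩
        refine ⟨⟨h1, fun j hj => ?_⟩, h3⟩
        have := ltr_le_maxpos A aa h3 j hj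
        rw [Fin.le_def] at this
        omega
    rw [Nat.card_congr (Equiv.subtypeEquivRight hiff)]
    exact card1' (mz+1) aa (mz - aa) (by omega) aa.isLt
  · rw [if_neg hak]
    haveI : IsEmpty {A : Perm (Fin (mz+1)) //
        (Avoids231 A ∧ ∀ j : Fin (mz+1), IsLTRMax A j → (j:ℕ) < k)
          ∧ ((A aa : Fin (mz+1)) : ℕ) = mz} :=
      ⟨fun q => hak (q.2.1.2 aa (maxpos_ltrmax q.1 aa q.2.2))⟩
    exact Nat.card_of_isEmpty

lemma gcard_succ (N k : ℕ) : gcard (N+1) k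
    = ∑ mm : Fin (N+1), if k ≤ (mm:ℕ) then hcard mm k * fcard (N - mm) else 0 := by
  rw [gcard, card_partition N (fun p : Perm (Fin (N+1)) => Avoids231 p ∧ Winnable (N+1) k p)]
  apply Finset.sum_congr rfl
  intro mm _
  by_cases hk : k ≤ (mm:ℕ)
  · rw [if_pos hk]
    exact card2' (N+1) mm (N - mm) k (by omega) mm.isLt hk
  · rw [if_neg hk]
    haveI : IsEmpty {p : Perm (Fin (N+1)) //
        (Avoids231 p ∧ Winnable (N+1) k p) ∧ ((p mm : Fin (N+1)) : ℕ) = N} :=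
      ⟨fun q => hk (win_maxpos q.1 mm q.2.2 q.2.1.2)⟩
    exact Nat.card_of_isEmpty

end PW

namespace PW
open Equiv Finset

lemma catalan_range (n : ℕ) :
    catalan (n+1) = ∑ a ∈ range (n+1), catalan a * catalan (n - a) := by
  rw [catalan_succ]
  exact Fin.sum_univ_eq_sum_range (fun a => catalan a * catalan (n - a)) (n+1)

lemma hcard_range (mz k : ℕ) : hcard (mz+1) k
    = ∑ a ∈ range (mz+1), if a < k then catalan a * catalan (mz - a) else 0 := by
  rw [hcard_succ,
    ← Fin.sum_univ_eq_sum_range (fun a => if a < k then catalan a * catalan (mz - a) else 0)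
      (mz+1)]
  apply Finset.sum_congr rfl
  intro aa _
  by_cases h : (aa:ℕ) < k
  · rw [if_pos h, if_pos h, fcard_eq, fcard_eq]
  · rw [if_neg h, if_neg h]

lemma hcard_le (mz k : ℕ) (h : mz ≤ k) : hcard mz k = catalan mz := by
  cases mz with
  | zero => rw [hcard_zero, catalan_zero]
  | succ mz =>
    rw [hcard_range, catalan_range]
    apply Finset.sum_congr rfl
    intro a ha
    rw [mem_range] at ha
    rw [if_pos (by omega)]

lemma hcard_pos_zero (mz : ℕ) : hcard (mz+1) 0 = 0 := by
  rw [hcard_range]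
  apply Finset.sum_eq_zero
  intro a _
  rw [if_neg (by omega)]

lemma hcard_step (mz k : ℕ) (h : k ≤ mz) :
    hcard (mz+1) (k+1) = hcard (mz+1) k + catalan k * catalan (mz - k) := by
  rw [hcard_range, hcard_range]
  have key : ∀ a ∈ range (mz+1),
      (if a < k+1 then catalan a * catalan (mz-a) else 0)
        = (if a < k then catalan a * catalan (mz-a) else 0)
          + (if a = k then catalan a * catalan (mz-a) else 0) := by
    intro a _
    rcases lt_trichotomy a k with h1 | rfl | h1
    · rw [if_pos (by omega), if_pos h1, if_neg (by omega), add_zero]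
    · rw [if_pos (by omega), if_neg (by omega), if_pos rfl, zero_add]
    · rw [if_neg (by omega), if_neg (by omega), if_neg (by omega), add_zero]
  rw [Finset.sum_congr rfl key, Finset.sum_add_distrib]
  congr 1
  rw [Finset.sum_eq_single_of_mem k (by rw [mem_range]; omega)]
  · rw [if_pos rfl]
  · intro b _ hb
    rw [if_neg hb]

lemma gcard_range (N k : ℕ) : gcard (N+1) k
    = ∑ mm ∈ range (N+1), if k ≤ mm then hcard mm k * catalan (N - mm) else 0 := by
  rw [gcard_succ,
    ← Fin.sum_univ_eq_sum_range (fun mm => if k ≤ mm then hcard mm k * catalan (N - mm) else 0)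
      (N+1)]
  apply Finset.sum_congr rfl
  intro mm _
  by_cases h : k ≤ (mm:ℕ)
  · rw [if_pos h, if_pos h, fcard_eq]
  · rw [if_neg h, if_neg h]

lemma gcard_eq (N : ℕ) : ∀ k ≤ N, gcard (N+1) k = catalan N := by
  intro k
  induction k with
  | zero =>
    intro _
    rw [gcard_range]
    rw [Finset.sum_eq_single_of_mem 0 (by rw [mem_range]; omega)]
    · rw [if_pos (by omega), hcard_zero, one_mul, Nat.sub_zero]
    · intro b _ hb
      obtain ⟨bz, rfl⟩ := Nat.exists_eq_succ_of_ne_zero hb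
      rw [if_pos (by omega), hcard_pos_zero, zero_mul]
  | succ k ihk =>
    intro hk1
    have ih := ihk (by omega)
    rw [gcard_range] at ih ⊢
    have key : ∀ mm ∈ range (N+1),
        (if k+1 ≤ mm then hcard mm (k+1) * catalan (N - mm) else 0)
          + (if mm = k then catalan k * catalan (N - k) else 0)
        = (if k ≤ mm then hcard mm k * catalan (N - mm) else 0)
          + (if k+1 ≤ mm then catalan k * catalan (mm - 1 - k) * catalan (N - mm) else 0) := by
      intro mm _
      rcases lt_trichotomy mm k with h1 | heq | h1
      · rw [if_neg (by omega), if_neg (by omega), if_neg (by omega), if_neg (by omega)]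
      · subst heq
        rw [if_neg (by omega), if_pos rfl, if_pos le_rfl, if_neg (by omega)]
        rw [hcard_le mm mm le_rfl, add_zero, zero_add]
      · obtain ⟨mz, rfl⟩ := Nat.exists_eq_succ_of_ne_zero (show mm ≠ 0 by omega)
        rw [if_pos (by omega), if_neg (by omega), if_pos (by omega), if_pos (by omega)]
        rw [hcard_step mz k (by omega), add_zero, add_mul,
          show mz+1-1-k = mz - k from by omega]
    have hsum := Finset.sum_congr rfl key
    rw [Finset.sum_add_distrib, Finset.sum_add_distrib] at hsum
    have hb : ∑ mm ∈ range (N+1), (if mm = k then catalan k * catalan (N - k) else 0)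
        = catalan k * catalan (N - k) := by
      rw [Finset.sum_eq_single_of_mem k (by rw [mem_range]; omega)]
      · rw [if_pos rfl]
      · intro b _ hbne
        rw [if_neg hbne]
    have hd : ∑ mm ∈ range (N+1),
        (if k+1 ≤ mm then catalan k * catalan (mm - 1 - k) * catalan (N - mm) else 0)
        = catalan k * catalan (N - k) := by
      rw [Finset.range_eq_Ico, ← Finset.sum_Ico_consecutive _ (by omega : 0 ≤ k+1)
        (by omega : k+1 ≤ N+1)]
      have hz : ∑ mm ∈ Finset.Ico 0 (k+1),
          (if k+1 ≤ mm then catalan k * catalan (mm - 1 - k) * catalan (N - mm) else 0) = 0 := by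
        apply Finset.sum_eq_zero
        intro mm hmm
        rw [Finset.mem_Ico] at hmm
        rw [if_neg (by omega)]
      rw [hz, zero_add, Finset.sum_Ico_eq_sum_range]
      have he : ∀ t ∈ range (N+1-(k+1)),
          (if k+1 ≤ k+1+t then catalan k * catalan (k+1+t - 1 - k) * catalan (N - (k+1+t)) else 0)
            = catalan k * (catalan t * catalan (N-k-1 - t)) := by
        intro t _
        rw [if_pos (by omega)]
        rw [show k+1+t-1-k = t from by omega, show N - (k+1+t) = N-k-1-t from by omega,
          mul_assoc]
      rw [Finset.sum_congr rfl he, ← Finset.mul_sum]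
      congr 1
      rw [show N+1-(k+1) = (N-k-1)+1 from by omega, ← catalan_range]
      congr 1
      omega
    rw [hb, hd, ih] at hsum
    omega

lemma gcard_final (N k : ℕ) (h1 : 1 ≤ N) (hk : k ≤ N - 1) : gcard N k = catalan (N-1) := by
  cases N with
  | zero => omega
  | succ n => exact gcard_eq n k (by simpa using hk)

end PW

namespace PW
open Filter

lemma catalan_ratio (n : ℕ) : (n+2) * catalan (n+1) = 2*(2*n+1) * catalan n := by
  have h1 := succ_mul_catalan_eq_centralBinom (n+1)
  have h2 := Nat.succ_mul_centralBinom_succ n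
  have h3 := succ_mul_catalan_eq_centralBinom n
  have key : (n+1) * ((n+2) * catalan (n+1)) = (n+1) * (2*(2*n+1) * catalan n) := by
    rw [h1, h2, ← h3]; ring
  exact Nat.eq_of_mul_eq_mul_left (by omega) key

lemma catalan_pos' (n : ℕ) : 0 < catalan n := by
  have h := succ_mul_catalan_eq_centralBinom n
  have := Nat.centralBinom_pos n
  by_contra hc
  push_neg at hc
  interval_cases h' : catalan n
  omega

lemma catalan_ratio_real (n : ℕ) :
    (catalan n : ℝ) / (catalan (n+1) : ℝ) = ((n:ℝ)+2) / (2*(2*(n:ℝ)+1)) := by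
  have hpos1 : (0:ℝ) < catalan (n+1) := by exact_mod_cast catalan_pos' (n+1)
  have hpos2 : (0:ℝ) < 2*(2*(n:ℝ)+1) := by positivity
  rw [div_eq_div_iff (ne_of_gt hpos1) (ne_of_gt hpos2)]
  have key : ((n:ℝ)+2) * (catalan (n+1) : ℝ) = 2*(2*(n:ℝ)+1) * (catalan n : ℝ) := by
    exact_mod_cast catalan_ratio n
  linarith [key]

lemma catalan_ratio_tendsto :
    Tendsto (fun n : ℕ => (catalan n : ℝ) / (catalan (n+1) : ℝ)) atTop (nhds (1/4)) := by
  have h0 : Tendsto (fun n : ℕ => ((n:ℝ))⁻¹) atTop (nhds 0) :=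
    tendsto_inv_atTop_nhds_zero_nat
  have hnum : Tendsto (fun n : ℕ => 1 + 2*((n:ℝ))⁻¹) atTop (nhds (1 + 2*0)) :=
    (tendsto_const_nhds.add (tendsto_const_nhds.mul h0))
  have hden : Tendsto (fun n : ℕ => 2*(2 + ((n:ℝ))⁻¹)) atTop (nhds (2*(2 + 0))) :=
    (tendsto_const_nhds.mul (tendsto_const_nhds.add h0))
  have hq : Tendsto (fun n : ℕ => (1 + 2*((n:ℝ))⁻¹) / (2*(2 + ((n:ℝ))⁻¹))) atTop
      (nhds ((1 + 2*0)/(2*(2+0)))) := hnum.div hden (by norm_num)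
  have heq : (fun n : ℕ => (1 + 2*((n:ℝ))⁻¹) / (2*(2 + ((n:ℝ))⁻¹)))
      =ᶠ[atTop] (fun n : ℕ => (catalan n : ℝ) / (catalan (n+1) : ℝ)) := by
    filter_upwards [eventually_ge_atTop 1] with n hn
    have hn0 : ((n:ℝ)) ≠ 0 := by
      have : (1:ℝ) ≤ (n:ℝ) := by exact_mod_cast hn
      linarith
    rw [catalan_ratio_real]
    field_simp
    try ring
  have := hq.congr' heq
  convert this using 2
  norm_num

end PW

/-- For a uniformly random 231-avoiding permutation of size `N`, the probability
that the `k`-positional strategy wins is `C_{N-1}/C_N` (for any `0 ≤ k ≤ N-1`),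
and this probability tends to `1/4` as `N → ∞`. -/
theorem prob_win_avoids231 :
    (∀ N k : ℕ, 1 ≤ N → k ≤ N - 1 →
      (Nat.card {p : Equiv.Perm (Fin N) // Avoids231 p ∧ Winnable N k p} : ℝ) /
        (Nat.card {p : Equiv.Perm (Fin N) // Avoids231 p} : ℝ) =
          (catalan (N - 1) : ℝ) / (catalan N : ℝ)) ∧
    Filter.Tendsto (fun N : ℕ => (catalan (N - 1) : ℝ) / (catalan N : ℝ))
      Filter.atTop (nhds (1 / 4)) := by
  constructor
  · intro N k h1 hk
    have hg : Nat.card {p : Equiv.Perm (Fin N) // Avoids231 p ∧ Winnable N k p}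
        = catalan (N-1) := PW.gcard_final N k h1 hk
    have hf : Nat.card {p : Equiv.Perm (Fin N) // Avoids231 p} = catalan N := PW.fcard_eq N
    rw [hg, hf]
  · have hcomp := PW.catalan_ratio_tendsto.comp (Filter.tendsto_sub_atTop_nat 1)
    apply hcomp.congr'
    filter_upwards [Filter.eventually_ge_atTop 1] with N hN
    have hN1 : N - 1 + 1 = N := by omega
    simp only [Function.comp]
    rw [hN1]
end

section
/- The sets of (position, value) pairs of left-to-right maxima arising from permutations of size N are in bijection with the sets of northeast corners of Dyck paths of size N. -/
/-- The set of (position, value) pairs (1-indexed) of left-to-right maxima of `p`. -/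
def ltrData {N : ℕ} (p : Equiv.Perm (Fin N)) : Set (ℕ × ℕ) :=
  {x | ∃ j : Fin N, IsLTRMax p j ∧ x = ((j : ℕ) + 1, (p j : ℕ) + 1)}

/-- Every prefix of the step word (`true` = north, `false` = east) has at least as
many north steps as east steps: the path stays weakly above `y = x`. -/
def IsPrefixDyck (w : List Bool) : Prop :=
  ∀ t : ℕ, (w.take t).count false ≤ (w.take t).count true

/-- `w` is (the step word of) a Dyck path of size `N`: a north/east lattice path
from `(0,0)` to `(N,N)` staying weakly above `y = x`. -/
def IsDyck (N : ℕ) (w : List Bool) : Prop :=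
  w.length = 2 * N ∧ w.count false = N ∧ IsPrefixDyck w

/-- The set of northeast corners of the path `w`: pairs `(column, height)` at the
end of the east step of each north step immediately followed by an east step. -/
def neCorners (w : List Bool) : Set (ℕ × ℕ) :=
  {x | ∃ t : ℕ, w[t]? = some true ∧ w[t + 1]? = some false ∧
    x = ((w.take (t + 2)).count false, (w.take (t + 2)).count true)}

namespace LTRAux

/-- The step word built from the running-height function `M`:
block `i` is `M (i+1) - M i` norths followed by one east. -/
def word (M : ℕ → ℕ) : ℕ → List Bool
  | 0 => []
  | n+1 => word M n ++ (List.replicate (M (n+1) - M n) true ++ [false])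

/-- The set of records of `M` below `N`, as corner data. -/
def recordSet (M : ℕ → ℕ) (N : ℕ) : Set (ℕ × ℕ) :=
  {x | ∃ i, i < N ∧ M i < M (i+1) ∧ x = (i + 1, M (i+1))}

lemma word_countF (M : ℕ → ℕ) (n : ℕ) : (word M n).count false = n := by
  induction n with
  | zero => rfl
  | succ n ih => simp [word, ih, List.count_replicate]

lemma word_countT (M : ℕ → ℕ) (h0 : M 0 = 0) (hm : Monotone M) (n : ℕ) :
    (word M n).count true = M n := by
  induction n with
  | zero => simp [word, h0]
  | succ n ih =>
    have h3 : M n ≤ M (n+1) := hm (by omega)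
    simp [word, ih, List.count_replicate]
    omega

lemma word_length (M : ℕ → ℕ) (h0 : M 0 = 0) (hm : Monotone M) (n : ℕ) :
    (word M n).length = n + M n := by
  induction n with
  | zero => simp [word, h0]
  | succ n ih =>
    have h3 : M n ≤ M (n+1) := hm (by omega)
    have h4 := word_countT M h0 hm n
    simp [word, ih]
    omega

lemma word_prefix (M : ℕ → ℕ) {m n : ℕ} (h : m ≤ n) : word M m <+: word M n := by
  induction n with
  | zero => simp_all
  | succ n ih =>
    rcases Nat.lt_or_ge m (n+1) with h' | h'
    · exact (ih (by omega)).trans (List.prefix_append _ _)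
    · have : m = n + 1 := by omega
      subst this; exact List.prefix_refl _

lemma word_congr {M M' : ℕ → ℕ} {n : ℕ} (h : ∀ i ≤ n, M i = M' i) :
    word M n = word M' n := by
  induction n with
  | zero => rfl
  | succ n ih =>
    rw [word, word, ih (fun i hi => h i (by omega)), h n (by omega), h (n+1) le_rfl]

lemma countF_take_block (k s : ℕ) :
    ((List.replicate k true ++ [false]).take s).count false = if k < s then 1 else 0 := by
  rw [List.take_append, List.length_replicate, List.count_append,
    List.take_replicate, List.count_replicate]
  rcases Nat.lt_or_ge k s with h | h
  · rw [List.take_of_length_le (by simp; omega)]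
    simp [if_pos h]
  · have hs : s - k = 0 := by omega
    rw [hs]
    simp [Nat.not_lt.mpr h]

lemma countT_take_block (k s : ℕ) :
    ((List.replicate k true ++ [false]).take s).count true = min s k := by
  rw [List.take_append, List.length_replicate, List.count_append,
    List.take_replicate, List.count_replicate]
  rcases Nat.lt_or_ge k s with h | h
  · rw [List.take_of_length_le (by simp; omega)]
    simp
  · have hs : s - k = 0 := by omega
    rw [hs]
    simp

lemma word_isPrefixDyck (M : ℕ → ℕ) (h0 : M 0 = 0) (hm : Monotone M) (n : ℕ)
    (hge : ∀ i ≤ n, i ≤ M i) : IsPrefixDyck (word M n) := by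
  induction n with
  | zero => intro t; simp [word]
  | succ n ih =>
    intro t
    rw [word, List.take_append, List.count_append, List.count_append,
      countF_take_block, countT_take_block]
    have ihn := ih (fun i hi => hge i (by omega)) t
    set l := word M n with hl
    set s := t - l.length with hs
    set k := M (n+1) - M n with hk
    rcases Nat.eq_zero_or_pos s with h | h
    · simp [h]; omega
    · -- t > l.length, so take t l = l
      have hlen : l.length ≤ t := by omega
      have : l.take t = l := List.take_of_length_le hlen
      rw [this]
      rw [word_countF, word_countT M h0 hm]
      have h1 : n ≤ M n := hge n (by omega)
      have h2 : n + 1 ≤ M (n+1) := hge (n+1) le_rfl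
      have h3 : M n ≤ M (n+1) := hm (by omega)
      split_ifs with h4 <;> omega


lemma word_last (M : ℕ → ℕ) (n : ℕ) (hn : 0 < n) :
    (word M n)[(word M n).length - 1]? = some false := by
  obtain ⟨m, rfl⟩ : ∃ m, n = m + 1 := ⟨n - 1, by omega⟩
  rw [word]
  rw [show word M m ++ (List.replicate (M (m+1) - M m) true ++ [false])
      = (word M m ++ List.replicate (M (m+1) - M m) true) ++ [false] by simp]
  rw [List.length_append, List.length_append]
  simp only [List.length_replicate, List.length_cons, List.length_nil]
  have := List.getElem?_concat_length (l := word M m ++ List.replicate (M (m+1) - M m) true) (a := false)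
  rw [List.length_append, List.length_replicate] at this
  convert this using 2
  omega

lemma exists_block (M : ℕ → ℕ) (n t : ℕ)
    (h1 : (word M n)[t]? = some true) (h2 : (word M n)[t+1]? = some false) :
    ∃ i < n, M i < M (i+1) ∧ t + 2 = (word M (i+1)).length := by
  induction n with
  | zero => simp [word] at h1
  | succ n ih =>
    set l := word M n with hl
    set k := M (n+1) - M n with hk
    rcases Nat.lt_or_ge (t+1) l.length with hlt | hge
    · rw [word, ← hl, ← hk, List.getElem?_append, if_pos (by omega)] at h1
      rw [word, ← hl, ← hk, List.getElem?_append, if_pos hlt] at h2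
      obtain ⟨i, hi, hr, he⟩ := ih h1 h2
      exact ⟨i, by omega, hr, he⟩
    · have hlen2 : t + 1 < (word M (n+1)).length := by
        by_contra hc
        rw [List.getElem?_eq_none (by omega)] at h2
        exact (Option.some_ne_none false h2.symm).elim
      rw [word, ← hl, ← hk, List.length_append, List.length_append,
        List.length_replicate] at hlen2
      simp only [List.length_cons, List.length_nil] at hlen2
      -- suffix index s = t+1 - l.length ≤ k
      rw [word, ← hl, ← hk, List.getElem?_append, if_neg (by omega)] at h2
      set s := t + 1 - l.length with hs
      have hsk : s ≤ k := by omega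
      rcases Nat.lt_or_ge s k with hsl | hse
      · -- within replicate: true, contradiction
        rw [List.getElem?_append, if_pos (by simp; omega), List.getElem?_replicate,
          if_pos hsl] at h2
        simp at h2
      · have hseq : s = k := by omega
        -- so t + 1 = l.length + k
        rcases Nat.eq_zero_or_pos k with hk0 | hkpos
        · -- w[t] is last element of word M n : false, contradiction
          have hn0 : 0 < n := by
            rcases Nat.eq_zero_or_pos n with h | h
            · exfalso
              have : l.length = 0 := by rw [hl]; simp [h, word]
              omega
            · exact h
          have ht : t = l.length - 1 := by omega
          have hlast := word_last M n hn0
          rw [← hl] at hlast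
          have hlpos : 0 < l.length := by
            by_contra hc
            rw [List.getElem?_eq_none (by omega)] at hlast
            exact Option.some_ne_none false hlast.symm
          rw [word, ← hl, ← hk, List.getElem?_append, if_pos (by omega), ht, hlast] at h1
          simp at h1
        · refine ⟨n, by omega, by omega, ?_⟩
          rw [word, ← hl, ← hk, List.length_append, List.length_append,
            List.length_replicate]
          simp only [List.length_cons, List.length_nil]
          omega

lemma take_of_prefix {l w : List Bool} (h : l <+: w) {t : ℕ} (ht : t = l.length) :
    w.take t = l := by
  subst ht
  exact (List.prefix_iff_eq_take.mp h).symm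

lemma word_corners (M : ℕ → ℕ) (h0 : M 0 = 0) (hm : Monotone M) (N : ℕ) :
    neCorners (word M N) = recordSet M N := by
  ext x
  constructor
  · rintro ⟨t, h1, h2, rfl⟩
    obtain ⟨i, hi, hr, he⟩ := exists_block M N t h1 h2
    have hpre : word M (i+1) <+: word M N := word_prefix M (by omega)
    rw [take_of_prefix hpre he, word_countF, word_countT M h0 hm]
    exact ⟨i, hi, hr, rfl⟩
  · rintro ⟨i, hi, hr, rfl⟩
    set k := M (i+1) - M i with hk
    have hkpos : 0 < k := by omega
    set l := word M i with hl
    set t := l.length + (k - 1) with ht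
    have hpre : word M (i+1) <+: word M N := word_prefix M (by omega)
    have hlen : (word M (i+1)).length = l.length + k + 1 := by
      rw [word, ← hl, ← hk]; simp; omega
    have hwi : word M (i+1) = l ++ (List.replicate k true ++ [false]) := by
      rw [word, ← hl, ← hk]
    obtain ⟨r, hrr⟩ := id hpre
    have hwN : word M N = l ++ (List.replicate k true ++ ([false] ++ r)) := by
      rw [← hrr, hwi]; simp
    refine ⟨t, ?_, ?_, ?_⟩
    · rw [hwN, List.getElem?_append_right (by omega),
        show t - l.length = k - 1 by omega,
        List.getElem?_append, if_pos (by simp; omega),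
        List.getElem?_replicate, if_pos (by omega)]
    · rw [hwN, List.getElem?_append_right (by omega),
        show t + 1 - l.length = k by omega,
        List.getElem?_append_right (by simp),
        show k - (List.replicate k true).length = 0 by simp]
      simp
    · rw [take_of_prefix hpre (by omega), word_countF, word_countT M h0 hm]

lemma word_isDyck (M : ℕ → ℕ) (h0 : M 0 = 0) (hm : Monotone M) (N : ℕ)
    (hge : ∀ i ≤ N, i ≤ M i) (hN : M N = N) : IsDyck N (word M N) := by
  refine ⟨?_, ?_, word_isPrefixDyck M h0 hm N hge⟩
  · rw [word_length M h0 hm, hN]; omega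
  · exact word_countF M N


lemma prefixDyck_append_left {l r : List Bool} (h : IsPrefixDyck (l ++ r)) :
    IsPrefixDyck l := by
  intro t
  rcases Nat.le_total t l.length with ht | ht
  · rw [← List.take_append_of_le_length ht]
    exact h t
  · rw [List.take_of_length_le ht, ← List.take_left (l₁ := l) (l₂ := r)]
    exact h l.length

lemma count_add_count (w : List Bool) : w.count true + w.count false = w.length := by
  induction w with
  | nil => rfl
  | cons a l ih => cases a <;> simp [List.count_cons] <;> omega

lemma exists_rep (w : List Bool) (hw : IsPrefixDyck w) :
    ∃ (M : ℕ → ℕ) (j : ℕ), M 0 = 0 ∧ Monotone M ∧ (∀ i ≤ w.count false, i ≤ M i) ∧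
      M (w.count false) + j = w.count true ∧
      w = word M (w.count false) ++ List.replicate j true := by
  induction w using List.reverseRecOn with
  | nil => exact ⟨fun _ => 0, 0, rfl, monotone_const, by simp, by simp, rfl⟩
  | append_singleton v a ih =>
    obtain ⟨M, j, h0, hm, hge, hcnt, hrep⟩ := ih (prefixDyck_append_left hw)
    cases a with
    | true =>
      refine ⟨M, j + 1, h0, hm, ?_, ?_, ?_⟩
      · simpa using hge
      · simp; omega
      · rw [show (v ++ [true]).count false = v.count false by simp,
          List.replicate_succ', ← List.append_assoc, ← hrep]
    | false =>
      set n := v.count false with hn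
      have hcF : (v ++ [false]).count false = n + 1 := by simp [hn]
      have hcT : (v ++ [false]).count true = v.count true := by simp
      have hwlen : n + 1 ≤ v.count true := by
        have := hw (v.length + 1)
        rw [List.take_of_length_le (by simp)] at this
        simp only [List.count_append] at this
        simp at this
        omega
      refine ⟨fun i => if i ≤ n then M i else M n + j, 0, ?_, ?_, ?_, ?_, ?_⟩
      · simp [h0]
      · intro a b hab
        dsimp only
        split_ifs with h1 h2 h2
        · exact hm hab
        · exact le_trans (hm h1) (Nat.le_add_right _ _)
        · omega
        · exact le_rfl
      · intro i hi
        rw [hcF] at hi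
        dsimp only
        split_ifs with h1
        · exact hge i h1
        · have : i = n + 1 := by omega
          omega
      · rw [hcF, hcT]
        show (if n + 1 ≤ n then M (n+1) else M n + j) + 0 = _
        rw [if_neg (by omega)]
        omega
      · rw [hcF]
        have hcong : word M n = word (fun i => if i ≤ n then M i else M n + j) n :=
          word_congr (fun i hi => by rw [if_pos hi])
        rw [List.replicate_zero, List.append_nil, word]
        rw [← hcong, if_neg (by omega), if_pos le_rfl]
        rw [show M n + j - M n = j by omega]
        rw [hrep]
        simp


lemma exists_last_record (M : ℕ → ℕ) (h0 : M 0 = 0) (hm : Monotone M) (j : ℕ)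
    (hj : 0 < M j) : ∃ i < j, M i < M (i+1) ∧ M (i+1) = M j := by
  induction j with
  | zero => omega
  | succ j ih =>
    rcases Nat.lt_or_ge (M j) (M (j+1)) with h | h
    · exact ⟨j, by omega, h, rfl⟩
    · have heq : M j = M (j+1) := le_antisymm (hm (by omega)) h
      obtain ⟨i, hi, hr, he⟩ := ih (by omega)
      exact ⟨i, by omega, hr, by omega⟩

lemma exists_M_of_perm (N : ℕ) (p : Equiv.Perm (Fin N)) :
    ∃ M : ℕ → ℕ, M 0 = 0 ∧ Monotone M ∧ (∀ i ≤ N, i ≤ M i) ∧ M N = N ∧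
      recordSet M N = ltrData p := by
  classical
  set q : ℕ → ℕ := fun j => if h : j < N then (p ⟨j, h⟩ : ℕ) + 1 else N with hq
  set M : ℕ → ℕ := fun i => (Finset.range i).sup q with hM
  have hsucc : ∀ i, M (i+1) = max (M i) (q i) := by
    intro i
    rw [hM]
    dsimp only
    rw [Finset.range_add_one, Finset.sup_insert, sup_comm]
  have hmono : Monotone M := fun a b hab => Finset.sup_mono (Finset.range_subset_range.mpr hab)
  have hqle : ∀ j, q j ≤ N := by
    intro j
    rw [hq]; dsimp only
    split_ifs with h
    · have := (p ⟨j, h⟩).isLt; omega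
    · exact le_rfl
  have hge : ∀ i ≤ N, i ≤ M i := by
    intro i hi
    have hinj : Set.InjOn q (Finset.range i) := by
      intro a ha b hb hab
      simp only [Finset.coe_range, Set.mem_Iio] at ha hb
      rw [hq] at hab
      simp only [dif_pos (lt_of_lt_of_le ha hi), dif_pos (lt_of_lt_of_le hb hi)] at hab
      have := p.injective (Fin.val_injective (by omega : ((p ⟨a, _⟩ : Fin N) : ℕ) = (p ⟨b, _⟩ : ℕ)))
      exact congrArg Fin.val this
    have hcard : ((Finset.range i).image q).card = i := by
      rw [Finset.card_image_of_injOn hinj, Finset.card_range]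
    have hsub : (Finset.range i).image q ⊆ Finset.Icc 1 (M i) := by
      intro y hy
      obtain ⟨a, ha, rfl⟩ := Finset.mem_image.mp hy
      rw [Finset.mem_range] at ha
      rw [Finset.mem_Icc]
      constructor
      · rw [hq]; dsimp only; split_ifs <;> omega
        
      · exact Finset.le_sup (Finset.mem_range.mpr ha)
    have := Finset.card_le_card hsub
    rw [hcard, Nat.card_Icc] at this
    omega
  have hMN : M N = N := by
    apply le_antisymm
    · exact Finset.sup_le (fun j _ => hqle j)
    · rcases Nat.eq_zero_or_pos N with h | h
      · omega
      · set jf : Fin N := p.symm ⟨N - 1, by omega⟩ with hjf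
        have : q jf.val = N := by
          rw [hq]; dsimp only
          rw [dif_pos jf.isLt]
          have : p ⟨jf.val, jf.isLt⟩ = ⟨N - 1, by omega⟩ := by
            rw [hjf]
            convert p.apply_symm_apply _
          rw [this]
          simp
          omega
        calc N = q jf.val := this.symm
        _ ≤ M N := Finset.le_sup (Finset.mem_range.mpr jf.isLt)
  refine ⟨M, by simp [hM], hmono, hge, hMN, ?_⟩
  have hqval : ∀ j : Fin N, q j.val = (p j : ℕ) + 1 := by
    intro j
    rw [hq]; dsimp only
    rw [dif_pos j.isLt]
  have hMlt : ∀ j : Fin N, ∀ a : Fin N, a < j → q a.val ≤ M j.val := by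
    intro j a ha
    exact Finset.le_sup (Finset.mem_range.mpr ha)
  ext x
  constructor
  · rintro ⟨i, hi, hr, rfl⟩
    rw [hsucc i] at hr ⊢
    have hqi : M i < q i := by omega
    have : max (M i) (q i) = q i := max_eq_right (le_of_lt hqi)
    rw [this]
    set jf : Fin N := ⟨i, hi⟩ with hjf
    refine ⟨jf, ?_, ?_⟩
    · intro a ha
      have h1 : q a.val ≤ M i := Finset.le_sup (Finset.mem_range.mpr ha)
      have h2 := hqval a
      have h3 := hqval jf
      have : q jf.val = q i := rfl
      rw [Fin.lt_iff_val_lt_val]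
      omega
    · have := hqval jf
      have hqq : q jf.val = q i := rfl
      rw [hqq] at this
      rw [this]
  · rintro ⟨j, hmax, rfl⟩
    refine ⟨j.val, j.isLt, ?_, ?_⟩
    · rw [hsucc j.val]
      have hMle : M j.val ≤ (p j : ℕ) := by
        apply Finset.sup_le
        intro a ha
        rw [Finset.mem_range] at ha
        set af : Fin N := ⟨a, lt_trans ha j.isLt⟩ with haf
        have h1 := hmax af (by rw [Fin.lt_iff_val_lt_val]; exact ha)
        have h2 := hqval af
        have : q a = q af.val := rfl
        rw [Fin.lt_iff_val_lt_val] at h1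
        omega
      have := hqval j
      omega
    · rw [hsucc j.val]
      have hMle : M j.val ≤ (p j : ℕ) := by
        apply Finset.sup_le
        intro a ha
        rw [Finset.mem_range] at ha
        set af : Fin N := ⟨a, lt_trans ha j.isLt⟩ with haf
        have h1 := hmax af (by rw [Fin.lt_iff_val_lt_val]; exact ha)
        have h2 := hqval af
        have : q a = q af.val := rfl
        rw [Fin.lt_iff_val_lt_val] at h1
        omega
      have := hqval j
      have : max (M j.val) (q j.val) = q j.val := max_eq_right (by omega)
      rw [this, hqval j]


lemma orderIso_lt_of_card {N : ℕ} (t : Finset (Fin N)) {m : ℕ} (h : t.card = m) (a : Fin m)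
    (B : Fin N) (hlt : (a : ℕ) < (t.filter (· < B)).card) :
    (t.orderIsoOfFin h a : Fin N) < B := by
  classical
  by_contra hc
  push_neg at hc
  have hcard : (t.filter (· < B)).card ≤ (a : ℕ) := by
    obtain ⟨g, hg⟩ : ∃ g : Fin N → ℕ,
        ∀ y, g y = if hy : y ∈ t then (((t.orderIsoOfFin h).symm ⟨y, hy⟩ : Fin m) : ℕ) else 0 :=
      ⟨_, fun _ => rfl⟩
    have := Finset.card_le_card_of_injOn g
      (s := t.filter (· < B)) (t := Finset.range a) ?_ ?_
    · simpa using this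
    · intro y hy
      rw [Finset.mem_coe, Finset.mem_filter] at hy
      obtain ⟨hyt, hyB⟩ := hy
      rw [hg y, dif_pos hyt, Finset.mem_coe, Finset.mem_range]
      by_contra hge
      push_neg at hge
      have h1 : (t.orderIsoOfFin h a : Fin N) ≤
          ((t.orderIsoOfFin h) ((t.orderIsoOfFin h).symm ⟨y, hyt⟩) : Fin N) :=
        Subtype.coe_le_coe.mpr ((t.orderIsoOfFin h).le_iff_le.mpr hge)
      rw [OrderIso.apply_symm_apply] at h1
      exact absurd (lt_of_le_of_lt h1 hyB) (not_lt.mpr hc)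
    · intro y1 hy1 y2 hy2 heq
      rw [Finset.mem_coe, Finset.mem_filter] at hy1 hy2
      rw [hg y1, hg y2, dif_pos hy1.1, dif_pos hy2.1] at heq
      have := (t.orderIsoOfFin h).symm.injective (Fin.val_injective heq)
      exact Subtype.mk_eq_mk.mp this
  omega

lemma exists_perm_of_M (N : ℕ) (M : ℕ → ℕ) (h0 : M 0 = 0) (hm : Monotone M)
    (hge : ∀ i ≤ N, i ≤ M i) (hN : M N = N) :
    ∃ p : Equiv.Perm (Fin N), ltrData p = recordSet M N := by
  classical
  have hMle : ∀ i ≤ N, M i ≤ N := fun i hi => hN ▸ hm hi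
  obtain ⟨R, hmemR⟩ : ∃ R : Finset (Fin N), ∀ i : Fin N, i ∈ R ↔ M i.val < M (i.val+1) :=
    ⟨Finset.univ.filter (fun i => M i.val < M (i.val+1)), fun i => by simp⟩
  have hnotR : ∀ i : Fin N, i ∉ R → M i.val = M (i.val+1) := by
    intro i hi
    have h1 : ¬ M i.val < M (i.val+1) := fun hlt => hi ((hmemR i).mpr hlt)
    exact le_antisymm (hm (Nat.le_succ _)) (not_lt.mp h1)
  have hvlt : ∀ i : Fin N, M (i.val+1) - 1 < N := by
    intro i
    have h1 := hMle (i.val+1) i.isLt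
    have h2 := i.pos
    omega
  obtain ⟨vmap, hvval⟩ : ∃ vmap : Fin N → Fin N, ∀ i, (vmap i : ℕ) = M (i.val+1) - 1 :=
    ⟨fun i => ⟨M (i.val+1) - 1, hvlt i⟩, fun i => rfl⟩
  have hRpos : ∀ i : Fin N, i ∈ R → 1 ≤ M (i.val+1) := fun i hi => by
    have := (hmemR i).mp hi; omega
  have hvinj : Set.InjOn vmap R := by
    intro a ha b hb hab
    rw [Finset.mem_coe] at ha hb
    have ha' := (hmemR a).mp ha
    have hb' := (hmemR b).mp hb
    have hval : M (a.val+1) - 1 = M (b.val+1) - 1 := by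
      rw [← hvval a, ← hvval b, hab]
    by_contra hne
    rcases lt_or_gt_of_ne hne with h | h
    · have := hm (show a.val+1 ≤ b.val from h)
      omega
    · have := hm (show b.val+1 ≤ a.val from h)
      omega
  obtain ⟨V, hmemV⟩ : ∃ V : Finset (Fin N), ∀ y : Fin N, y ∈ V ↔ ∃ j ∈ R, vmap j = y :=
    ⟨R.image vmap, fun y => by simp⟩
  have hVR : V = R.image vmap := by
    ext y
    rw [hmemV, Finset.mem_image]
  have hVcard : V.card = R.card := by rw [hVR]; exact Finset.card_image_of_injOn hvinj
  have hcV : Vᶜ.card = Rᶜ.card := by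
    rw [Finset.card_compl, Finset.card_compl, hVcard]
  obtain ⟨kk, hkk⟩ : ∃ kk : Fin N → ℕ,
      ∀ i, kk i = ((Finset.Iio i).filter (fun x => ¬ x ∈ R)).card :=
    ⟨_, fun i => rfl⟩
  have hksub : ∀ i : Fin N, (Finset.Iio i).filter (fun x => ¬ x ∈ R) ⊆ Rᶜ := by
    intro i x hx
    rw [Finset.mem_filter] at hx
    exact Finset.mem_compl.mpr hx.2
  have hklt : ∀ i : Fin N, i ∉ R → kk i < Rᶜ.card := by
    intro i hi
    rw [hkk i]
    exact Finset.card_lt_card ((Finset.ssubset_iff_of_subset (hksub i)).mpr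
      ⟨i, Finset.mem_compl.mpr hi, by simp⟩)
  obtain ⟨f, hfdef⟩ : ∃ f : Fin N → Fin N, ∀ i, f i =
      if h : i ∈ R then vmap i else (Vᶜ.orderIsoOfFin hcV ⟨kk i, hklt i h⟩ : Fin N) :=
    ⟨_, fun i => rfl⟩
  have hfrec : ∀ i : Fin N, i ∈ R → (f i : ℕ) = M (i.val+1) - 1 := by
    intro i hi
    rw [hfdef i, dif_pos hi, hvval]
  have hbound : ∀ i : Fin N, i ∉ R → (f i : ℕ) < M i.val := by
    intro i hi
    have hMeq := hnotR i hi
    have hMge : i.val + 1 ≤ M i.val := by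
      have := hge (i.val+1) i.isLt
      omega
    rcases Nat.lt_or_ge (M i.val) N with hMN | hMN
    · obtain ⟨B, hBval⟩ : ∃ B : Fin N, (B : ℕ) = M i.val := ⟨⟨M i.val, hMN⟩, rfl⟩
      have hpart1 : ((Finset.Iio i).filter (fun x => x ∈ R)).card
          + ((Finset.Iio i).filter (fun x => ¬ x ∈ R)).card = i.val := by
        rw [Finset.card_filter_add_card_filter_not]
        simp
      have him : (Finset.Iio B).filter (fun x => x ∈ V)
          = (R.filter (fun x => x < i)).image vmap := by
        ext y
        simp only [Finset.mem_filter, Finset.mem_Iio, Finset.mem_image]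
        constructor
        · rintro ⟨hyB, hyV⟩
          obtain ⟨j, hj, rfl⟩ := (hmemV y).mp hyV
          refine ⟨j, ⟨hj, ?_⟩, rfl⟩
          by_contra hji
          push_neg at hji
          have h1 : M i.val ≤ M j.val := hm hji
          have h2 := (hmemR j).mp hj
          rw [Fin.lt_def, hvval, hBval] at hyB
          omega
        · rintro ⟨j, ⟨hjR, hji⟩, rfl⟩
          refine ⟨?_, (hmemV _).mpr ⟨j, hjR, rfl⟩⟩
          rw [Fin.lt_def, hvval, hBval]
          have h1 : M (j.val+1) ≤ M i.val := hm (Fin.lt_def.mp hji)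
          have h2 := hRpos j hjR
          omega
      have hfil_eq : (Finset.Iio i).filter (fun x => x ∈ R) = R.filter (fun x => x < i) := by
        ext y
        simp only [Finset.mem_filter, Finset.mem_Iio]
        exact and_comm
      have hVfil : ((Finset.Iio B).filter (fun x => x ∈ V)).card
          = ((Finset.Iio i).filter (fun x => x ∈ R)).card := by
        rw [him, hfil_eq, Finset.card_image_of_injOn
          (hvinj.mono (fun x hx => Finset.mem_coe.mpr
            (Finset.mem_filter.mp (Finset.mem_coe.mp hx)).1))]
      have hpart2 : ((Finset.Iio B).filter (fun x => x ∈ V)).card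
          + ((Finset.Iio B).filter (fun x => ¬ x ∈ V)).card = M i.val := by
        rw [Finset.card_filter_add_card_filter_not]
        simp [hBval]
      have hcfil : Vᶜ.filter (fun x => x < B) = (Finset.Iio B).filter (fun x => ¬ x ∈ V) := by
        ext y
        simp only [Finset.mem_filter, Finset.mem_Iio, Finset.mem_compl]
        exact and_comm
      have hlt : kk i < (Vᶜ.filter (fun x => x < B)).card := by
        rw [hcfil, hkk i]
        omega
      have hres := orderIso_lt_of_card Vᶜ hcV ⟨kk i, hklt i hi⟩ B hlt
      rw [hfdef i, dif_neg hi]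
      rw [Fin.lt_def, hBval] at hres
      exact hres
    · have := (f i).isLt
      omega
  have hkinj : ∀ a b : Fin N, a ∉ R → b ∉ R → a < b → kk a < kk b := by
    intro a b ha hb hab
    rw [hkk a, hkk b]
    apply Finset.card_lt_card
    rw [Finset.ssubset_iff_of_subset]
    · exact ⟨a, Finset.mem_filter.mpr ⟨Finset.mem_Iio.mpr hab, ha⟩, by simp⟩
    · intro x hx
      rw [Finset.mem_filter] at hx ⊢
      exact ⟨Finset.mem_Iio.mpr (lt_trans (Finset.mem_Iio.mp hx.1) hab), hx.2⟩
  have hfinj : Function.Injective f := by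
    have hmix : ∀ a b : Fin N, a ∈ R → b ∉ R → f a ≠ f b := by
      intro a b ha hb heq
      have h1 : f a ∈ V := by
        rw [hfdef a, dif_pos ha]
        exact (hmemV _).mpr ⟨a, ha, rfl⟩
      have h2 : f b ∈ Vᶜ := by
        rw [hfdef b, dif_neg hb]
        exact (Vᶜ.orderIsoOfFin hcV _).2
      rw [heq] at h1
      exact Finset.mem_compl.mp h2 h1
    intro a b hab
    by_cases ha : a ∈ R <;> by_cases hb : b ∈ R
    · apply hvinj (Finset.mem_coe.mpr ha) (Finset.mem_coe.mpr hb)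
      rwa [hfdef a, dif_pos ha, hfdef b, dif_pos hb] at hab
    · exact absurd hab (hmix a b ha hb)
    · exact absurd hab.symm (hmix b a hb ha)
    · rw [hfdef a, dif_neg ha, hfdef b, dif_neg hb] at hab
      have h1 : (⟨kk a, hklt a ha⟩ : Fin _) = ⟨kk b, hklt b hb⟩ :=
        (Vᶜ.orderIsoOfFin hcV).injective (Subtype.coe_injective hab)
      have h2 : kk a = kk b := congrArg Fin.val h1
      by_contra hne
      rcases lt_or_gt_of_ne hne with h | h
      · exact absurd h2 (Nat.ne_of_lt (hkinj a b ha hb h))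
      · exact absurd h2.symm (Nat.ne_of_lt (hkinj b a hb ha h))
  obtain ⟨p, hpf⟩ : ∃ p : Equiv.Perm (Fin N), ∀ j, p j = f j :=
    ⟨Equiv.ofBijective f (Finite.injective_iff_bijective.mp hfinj), fun j => rfl⟩
  have hLTR : ∀ i : Fin N, i ∈ R → IsLTRMax p i := by
    intro i hi j hji
    rw [hpf, hpf, Fin.lt_def]
    have hfi := hfrec i hi
    have hrec := (hmemR i).mp hi
    have hji' := Fin.lt_def.mp hji
    by_cases hj : j ∈ R
    · have hfj := hfrec j hj
      have h1 : M (j.val+1) ≤ M i.val := hm hji'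
      have h2 := hRpos j hj
      omega
    · have hfj := hbound j hj
      have h1 : M j.val ≤ M i.val := hm (le_of_lt hji')
      omega
  have hNLTR : ∀ j : Fin N, j ∉ R → ¬ IsLTRMax p j := by
    intro j hj hmax
    have hMj : 0 < M j.val := by
      have h1 := hge (j.val+1) j.isLt
      have h2 := hnotR j hj
      omega
    obtain ⟨i, hij, hrec, heq⟩ := exists_last_record M h0 hm j.val hMj
    have hiN : i < N := lt_trans hij j.isLt
    have hiR : (⟨i, hiN⟩ : Fin N) ∈ R := (hmemR _).mpr hrec
    have h1 := hmax ⟨i, hiN⟩ (Fin.lt_def.mpr hij)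
    rw [hpf, hpf, Fin.lt_def] at h1
    have h2 : (f ⟨i, hiN⟩ : ℕ) = M (i+1) - 1 := hfrec _ hiR
    have h3 := hbound j hj
    omega
  refine ⟨p, ?_⟩
  ext x
  constructor
  · rintro ⟨j, hmax, rfl⟩
    have hj : j ∈ R := by
      by_contra hc
      exact hNLTR j hc hmax
    refine ⟨j.val, j.isLt, (hmemR j).mp hj, ?_⟩
    have h2 : (p j : ℕ) = M (j.val+1) - 1 := by rw [hpf]; exact hfrec j hj
    have h3 := hRpos j hj
    rw [Prod.ext_iff]
    exact ⟨rfl, by dsimp only; omega⟩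
  · rintro ⟨i, hi, hrec, rfl⟩
    have hiR : (⟨i, hi⟩ : Fin N) ∈ R := (hmemR _).mpr hrec
    refine ⟨⟨i, hi⟩, hLTR _ hiR, ?_⟩
    have h2 : (p ⟨i, hi⟩ : ℕ) = M (i+1) - 1 := by rw [hpf]; exact hfrec _ hiR
    have h3 := hRpos _ hiR
    rw [Prod.ext_iff]
    exact ⟨rfl, by dsimp only; omega⟩

end LTRAux

/-- The possible sets of (position, value) pairs of left-to-right maxima of
permutations of size `N` are exactly (hence in bijection with, via the identity
correspondence `(i_j, p_{i_j}) ↔ (column, height)`) the sets of northeast corners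
of Dyck paths of size `N`. -/
theorem ltrData_sets_eq_neCorner_sets (N : ℕ) :
    {A : Set (ℕ × ℕ) | ∃ p : Equiv.Perm (Fin N), A = ltrData p} =
      {A : Set (ℕ × ℕ) | ∃ w : List Bool, IsDyck N w ∧ A = neCorners w} := by
  ext A
  simp only [Set.mem_setOf_eq]
  constructor
  · rintro ⟨p, rfl⟩
    obtain ⟨M, h0, hm, hge, hN, hrec⟩ := LTRAux.exists_M_of_perm N p
    refine ⟨LTRAux.word M N, LTRAux.word_isDyck M h0 hm N hge hN, ?_⟩
    rw [LTRAux.word_corners M h0 hm N]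
    exact hrec.symm
  · rintro ⟨w, ⟨hlen, hcF, hpre⟩, rfl⟩
    obtain ⟨M, j, h0, hm, hge, hcnt, hrep⟩ := LTRAux.exists_rep w hpre
    have hcT : w.count true = N := by
      have := LTRAux.count_add_count w
      omega
    rw [hcF] at hge hcnt hrep
    rw [hcT] at hcnt
    have hj : j = 0 := by
      have := hge N le_rfl
      omega
    have hMN : M N = N := by omega
    subst hj
    rw [List.replicate_zero, List.append_nil] at hrep
    obtain ⟨p, hp⟩ := LTRAux.exists_perm_of_M N M h0 hm hge hMN
    refine ⟨p, ?_⟩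
    rw [hp, hrep, LTRAux.word_corners M h0 hm N]
end

section
/- Every permutation obtained from a set of left-to-right-maxima data by placing the prescribed maxima in their positions and filling the remaining positions with the complementary values in increasing order is 321-avoiding. -/
/-- `p` avoids the pattern 321: no indices `i < j < l` with `p i > p j > p l`. -/
def Avoids321 {N : ℕ} (p : Equiv.Perm (Fin N)) : Prop :=
  ¬ ∃ i j l : Fin N, i < j ∧ j < l ∧ p l < p j ∧ p j < p i

/-- Any permutation obtained from left-to-right-maxima data by placing the
prescribed maxima in their positions and filling the remaining positions with the
complementary values in increasing order is 321-avoiding.  Such canonical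
completions are exactly the permutations whose non-left-to-right-maxima form an
increasing subsequence. -/
theorem canonical_completion_avoids321 (N : ℕ) (p : Equiv.Perm (Fin N))
    (hfill : ∀ i j : Fin N, i < j → ¬ IsLTRMax p i → ¬ IsLTRMax p j → p i < p j) :
    Avoids321 p := by
  rintro ⟨i, j, l, hij, hjl, h1, h2⟩
  have hj : ¬ IsLTRMax p j := fun h => absurd (h i hij) (not_lt.2 h2.le)
  have hl : ¬ IsLTRMax p l := fun h => absurd (h j hjl) (not_lt.2 h1.le)
  exact absurd (hfill j l hjl hj hl) (not_lt.2 h1.le)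
end

section
/- The number of 321-avoiding permutations of size N whose left-to-right maxima coincide with a given valid set of (position, value) pairs is exactly one. -/
namespace LTRAux
variable {N : ℕ}

attribute [local instance] Classical.propDecidable

/-- If `p i ≤ v` for all `i ≤ k` then `k ≤ v` (pigeonhole). -/
lemma le_of_forall_le (p : Equiv.Perm (Fin N)) (k v : Fin N)
    (h : ∀ i, i ≤ k → p i ≤ v) : (k : ℕ) ≤ (v : ℕ) := by
  have hsub : (Finset.Iic k).image p ⊆ Finset.Iic v := by
    intro x hx
    simp only [Finset.mem_image, Finset.mem_Iic] at hx ⊢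
    obtain ⟨i, hi, rfl⟩ := hx
    exact h i hi
  have hcard := Finset.card_le_card hsub
  rw [Finset.card_image_of_injective _ p.injective, Fin.card_Iic, Fin.card_Iic] at hcard
  omega

lemma ltrMax_ge (p : Equiv.Perm (Fin N)) {j : Fin N} (h : IsLTRMax p j) :
    (j : ℕ) ≤ (p j : ℕ) := by
  refine le_of_forall_le p j (p j) (fun i hi => ?_)
  rcases eq_or_lt_of_le hi with rfl | hlt
  · exact le_rfl
  · exact (h i hlt).le

lemma exists_argmax (p : Equiv.Perm (Fin N)) (k : Fin N) :
    ∃ j', j' ≤ k ∧ IsLTRMax p j' ∧ ∀ i, i ≤ k → p i ≤ p j' := by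
  obtain ⟨j', hj'mem, hmax⟩ := (Finset.Iic k).exists_max_image p ⟨k, Finset.mem_Iic.2 le_rfl⟩
  have hj'k : j' ≤ k := Finset.mem_Iic.1 hj'mem
  refine ⟨j', hj'k, fun i hi => ?_, fun i hi => hmax i (Finset.mem_Iic.2 hi)⟩
  have hle := hmax i (Finset.mem_Iic.2 (le_trans hi.le hj'k))
  exact lt_of_le_of_ne hle (fun he => (ne_of_lt hi) (p.injective he))

noncomputable def build (p₀ : Equiv.Perm (Fin N)) (hN : 0 < N) : ℕ → Fin N
  | j =>
    if h : ∃ hj : j < N, IsLTRMax p₀ ⟨j, hj⟩ then p₀ ⟨j, h.choose⟩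
    else
      if hs : (Finset.univ \ Finset.image (fun i : Fin j => build p₀ hN i) Finset.univ).Nonempty
      then (Finset.univ \ Finset.image (fun i : Fin j => build p₀ hN i) Finset.univ).min' hs
      else ⟨0, hN⟩
  decreasing_by all_goals exact i.isLt

noncomputable def used (p₀ : Equiv.Perm (Fin N)) (hN : 0 < N) (j : ℕ) : Finset (Fin N) :=
  Finset.image (fun i : Fin j => build p₀ hN i) Finset.univ

lemma build_of_ltr (p₀ : Equiv.Perm (Fin N)) (hN : 0 < N) {j : ℕ} (hj : j < N)
    (h : IsLTRMax p₀ ⟨j, hj⟩) : build p₀ hN j = p₀ ⟨j, hj⟩ := by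
  rw [build, dif_pos ⟨hj, h⟩]

lemma build_of_not_ltr (p₀ : Equiv.Perm (Fin N)) (hN : 0 < N) {j : ℕ}
    (h : ¬ ∃ hj : j < N, IsLTRMax p₀ ⟨j, hj⟩)
    (hs : (Finset.univ \ used p₀ hN j).Nonempty) :
    build p₀ hN j = (Finset.univ \ used p₀ hN j).min' hs := by
  rw [build, dif_neg h]
  rw [used] at hs
  rw [dif_pos hs]
  rfl

lemma mem_used (p₀ : Equiv.Perm (Fin N)) (hN : 0 < N) {i j : ℕ} (h : i < j) :
    build p₀ hN i ∈ used p₀ hN j :=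
  Finset.mem_image.2 ⟨⟨i, h⟩, Finset.mem_univ _, rfl⟩

lemma build_spec (p₀ : Equiv.Perm (Fin N)) (hN : 0 < N) :
    ∀ j, j < N →
      build p₀ hN j ∉ used p₀ hN j ∧
      ((¬ ∃ hj : j < N, IsLTRMax p₀ ⟨j, hj⟩) →
        (build p₀ hN j : ℕ) ≤ j ∧
        ∀ x : Fin N, x ∉ used p₀ hN j → build p₀ hN j ≤ x) := by
  intro j
  induction j using Nat.strong_induction_on with
  | _ j IH =>
  intro hj
  have hinj : ∀ i1 i2 : ℕ, i1 < j → i2 < j → build p₀ hN i1 = build p₀ hN i2 → i1 = i2 := by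
    intro i1 i2 h1 h2 he
    rcases lt_trichotomy i1 i2 with h | h | h
    · exact absurd (he ▸ mem_used p₀ hN h) (IH i2 h2 (h2.trans hj)).1
    · exact h
    · exact absurd (he ▸ mem_used p₀ hN h) (IH i1 h1 (h1.trans hj)).1
  have hcard : (used p₀ hN j).card = j := by
    rw [used, Finset.card_image_of_injOn
      (fun a _ b _ hab => Fin.ext (hinj a b a.isLt b.isLt hab))]
    simp
  have hs : (Finset.univ \ used p₀ hN j).Nonempty := by
    rw [← Finset.card_pos, Finset.card_sdiff_of_subset (Finset.subset_univ _), hcard,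
      Finset.card_univ, Fintype.card_fin]
    omega
  by_cases h : ∃ hj' : j < N, IsLTRMax p₀ ⟨j, hj'⟩
  · obtain ⟨hj', hltr⟩ := h
    have hb : build p₀ hN j = p₀ ⟨j, hj'⟩ := build_of_ltr p₀ hN hj' hltr
    constructor
    · intro hmem
      rw [hb] at hmem
      obtain ⟨i, -, hi⟩ := Finset.mem_image.1 hmem
      by_cases hiLTR : ∃ hi' : (i : ℕ) < N, IsLTRMax p₀ ⟨(i : ℕ), hi'⟩
      · obtain ⟨hi', hiltr⟩ := hiLTR
        have : build p₀ hN (i : ℕ) = p₀ ⟨(i : ℕ), hi'⟩ := build_of_ltr p₀ hN hi' hiltr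
        rw [this] at hi
        have := p₀.injective hi
        have : (i : ℕ) = j := congrArg Fin.val this
        omega
      · have hle := ((IH (i : ℕ) i.isLt (i.isLt.trans hj)).2 hiLTR).1
        have hge : j ≤ (p₀ ⟨j, hj'⟩ : ℕ) := ltrMax_ge p₀ hltr
        rw [hi] at hle
        have := i.isLt
        omega
    · intro hcon; exact absurd ⟨hj', hltr⟩ hcon
  · have hb : build p₀ hN j = (Finset.univ \ used p₀ hN j).min' hs :=
      build_of_not_ltr p₀ hN h hs
    have hmin := Finset.min'_mem _ hs
    rw [← hb] at hmin
    have hnot : build p₀ hN j ∉ used p₀ hN j := (Finset.mem_sdiff.1 hmin).2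
    refine ⟨hnot, fun _ => ⟨?_, fun x hx => ?_⟩⟩
    · -- some unused value ≤ j exists
      have hT : (Finset.Iic (⟨j, hj⟩ : Fin N)).card = j + 1 := Fin.card_Iic _
      have hne : (Finset.Iic (⟨j, hj⟩ : Fin N) \ used p₀ hN j).Nonempty := by
        rw [← Finset.card_pos]
        have := Finset.le_card_sdiff (used p₀ hN j) (Finset.Iic (⟨j, hj⟩ : Fin N))
        omega
      obtain ⟨x, hx⟩ := hne
      rw [Finset.mem_sdiff, Finset.mem_Iic] at hx
      have hxs : x ∈ Finset.univ \ used p₀ hN j :=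
        Finset.mem_sdiff.2 ⟨Finset.mem_univ _, hx.2⟩
      have := Finset.min'_le _ x hxs
      rw [← hb] at this
      have hxj : (x : ℕ) ≤ j := hx.1
      exact le_trans this hxj
    · have hxs : x ∈ Finset.univ \ used p₀ hN j :=
        Finset.mem_sdiff.2 ⟨Finset.mem_univ _, hx⟩
      have := Finset.min'_le _ x hxs
      rw [← hb] at this
      exact this

lemma build_inj (p₀ : Equiv.Perm (Fin N)) (hN : 0 < N) {i j : ℕ} (hi : i < N) (hj : j < N)
    (he : build p₀ hN i = build p₀ hN j) : i = j := by
  rcases lt_trichotomy i j with h | h | h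
  · exact absurd (he ▸ mem_used p₀ hN h) (build_spec p₀ hN j hj).1
  · exact h
  · exact absurd (he ▸ mem_used p₀ hN h) (build_spec p₀ hN i hi).1

noncomputable def buildPerm (p₀ : Equiv.Perm (Fin N)) (hN : 0 < N) : Equiv.Perm (Fin N) :=
  Equiv.ofBijective (fun k : Fin N => build p₀ hN k)
    (Finite.injective_iff_bijective.1
      (fun a b hab => Fin.ext (build_inj p₀ hN a.isLt b.isLt hab)))

lemma buildPerm_apply (p₀ : Equiv.Perm (Fin N)) (hN : 0 < N) (k : Fin N) :
    buildPerm p₀ hN k = build p₀ hN (k : ℕ) := rfl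

lemma cond_iff (p₀ : Equiv.Perm (Fin N)) (k : Fin N) :
    (∃ hj : (k : ℕ) < N, IsLTRMax p₀ ⟨(k : ℕ), hj⟩) ↔ IsLTRMax p₀ k := by
  constructor
  · rintro ⟨h, hl⟩; simpa using hl
  · intro h; exact ⟨k.isLt, by simpa using h⟩

lemma ltr_buildPerm_iff (p₀ : Equiv.Perm (Fin N)) (hN : 0 < N) (k : Fin N) :
    IsLTRMax (buildPerm p₀ hN) k ↔ IsLTRMax p₀ k := by
  constructor
  · -- contrapositive
    intro hP
    by_contra hk
    obtain ⟨j', hj'k, hj'ltr, hj'max⟩ := exists_argmax p₀ k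
    have hne : j' ≠ k := fun he => hk (he ▸ hj'ltr)
    have hj'lt : j' < k := lt_of_le_of_ne hj'k hne
    have hPj' : buildPerm p₀ hN j' = p₀ j' := by
      rw [buildPerm_apply]
      rw [build_of_ltr p₀ hN j'.isLt (by simpa using hj'ltr)]
    have hkcond : ¬ ∃ hj : (k : ℕ) < N, IsLTRMax p₀ ⟨(k : ℕ), hj⟩ :=
      fun hc => hk ((cond_iff p₀ k).1 hc)
    have hspec := (build_spec p₀ hN (k : ℕ) k.isLt).2 hkcond
    -- k ≤ p₀ j'
    have hk_le : (k : ℕ) ≤ (p₀ j' : ℕ) := le_of_forall_le p₀ k (p₀ j') hj'max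
    -- build k ≠ p₀ j'
    have hmem : p₀ j' ∈ used p₀ hN (k : ℕ) := by
      have := mem_used p₀ hN (show (j' : ℕ) < (k : ℕ) from hj'lt)
      rwa [build_of_ltr p₀ hN j'.isLt (by simpa using hj'ltr), Fin.eta] at this
    have hnmem := (build_spec p₀ hN (k : ℕ) k.isLt).1
    have hne2 : build p₀ hN (k : ℕ) ≠ p₀ j' := fun he => hnmem (he ▸ hmem)
    have hlt : buildPerm p₀ hN k < buildPerm p₀ hN j' := by
      rw [buildPerm_apply, hPj']
      have h1 : (build p₀ hN (k : ℕ) : ℕ) ≤ (k : ℕ) := hspec.1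
      have h2 : (build p₀ hN (k : ℕ) : ℕ) ≠ (p₀ j' : ℕ) :=
        fun he => hne2 (Fin.ext he)
      exact Fin.lt_def.2 (by omega)
    exact absurd (hP j' hj'lt) (not_lt.2 hlt.le)
  · intro h i hik
    have hPk : buildPerm p₀ hN k = p₀ k := by
      rw [buildPerm_apply, build_of_ltr p₀ hN k.isLt (by simpa using h)]
    rw [hPk]
    by_cases hiLTR : IsLTRMax p₀ i
    · have : buildPerm p₀ hN i = p₀ i := by
        rw [buildPerm_apply, build_of_ltr p₀ hN i.isLt (by simpa using hiLTR)]
      rw [this]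
      exact h i hik
    · have hicond : ¬ ∃ hj : (i : ℕ) < N, IsLTRMax p₀ ⟨(i : ℕ), hj⟩ :=
        fun hc => hiLTR ((cond_iff p₀ i).1 hc)
      have hle := ((build_spec p₀ hN (i : ℕ) i.isLt).2 hicond).1
      have hge : (k : ℕ) ≤ (p₀ k : ℕ) := ltrMax_ge p₀ h
      have hik' : (i : ℕ) < (k : ℕ) := hik
      rw [buildPerm_apply]
      exact Fin.lt_def.2 (by omega)

lemma buildPerm_ltr_val (p₀ : Equiv.Perm (Fin N)) (hN : 0 < N) {k : Fin N}
    (h : IsLTRMax p₀ k) : buildPerm p₀ hN k = p₀ k := by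
  rw [buildPerm_apply, build_of_ltr p₀ hN k.isLt (by simpa using h)]

lemma avoids_buildPerm (p₀ : Equiv.Perm (Fin N)) (hN : 0 < N) :
    Avoids321 (buildPerm p₀ hN) := by
  rintro ⟨i, j, l, hij, hjl, h1, h2⟩
  set P := buildPerm p₀ hN with hP
  have hjn : ¬ IsLTRMax P j := fun h => absurd (h i hij) (not_lt.2 h2.le)
  have hln : ¬ IsLTRMax P l := fun h => absurd (h j hjl) (not_lt.2 h1.le)
  have hjn' : ¬ IsLTRMax p₀ j := fun h => hjn ((ltr_buildPerm_iff p₀ hN j).2 h)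
  have hjcond : ¬ ∃ hj : (j : ℕ) < N, IsLTRMax p₀ ⟨(j : ℕ), hj⟩ :=
    fun hc => hjn' ((cond_iff p₀ j).1 hc)
  have hspec := ((build_spec p₀ hN (j : ℕ) j.isLt).2 hjcond).2
  have hnm : build p₀ hN (l : ℕ) ∉ used p₀ hN (j : ℕ) := by
    intro hmem
    obtain ⟨m, -, hm⟩ := Finset.mem_image.1 hmem
    have : (m : ℕ) = (l : ℕ) := build_inj p₀ hN (m.isLt.trans j.isLt) l.isLt hm
    have hml : (m : ℕ) < (j : ℕ) := m.isLt
    have hjl' : (j : ℕ) < (l : ℕ) := hjl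
    omega
  have := hspec (build p₀ hN (l : ℕ)) hnm
  rw [show build p₀ hN (l : ℕ) = P l from rfl, show build p₀ hN (j : ℕ) = P j from rfl] at this
  exact absurd h1 (not_lt.2 this)

/-- Key uniqueness fact: in a 321-avoiding permutation, a non-LTR-max value is the
minimum of all values not used earlier. -/
lemma min_unused {p : Equiv.Perm (Fin N)} (hp : Avoids321 p) {j : Fin N}
    (hj : ¬ IsLTRMax p j) (v : Fin N) (hv : ∀ i, i < j → p i ≠ v) : p j ≤ v := by
  have hpl : p (p.symm v) = v := p.apply_symm_apply v
  rcases lt_trichotomy (p.symm v) j with h | h | h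
  · exact absurd hpl (hv _ h)
  · rw [← hpl, h]
  · by_contra hlt
    rw [not_le] at hlt
    have hex : ∃ i, i < j ∧ ¬ (p i < p j) := by
      by_contra hcon
      push_neg at hcon
      exact hj (fun i hi => hcon i hi)
    obtain ⟨i, hij, hge⟩ := hex
    rw [not_lt] at hge
    have hne : p j ≠ p i := fun he => (ne_of_lt hij) (p.injective he.symm)
    exact hp ⟨i, j, p.symm v, hij, h, by rw [hpl]; exact hlt, lt_of_le_of_ne hge (hne.symm.symm)⟩

lemma ext_of_avoids {p q : Equiv.Perm (Fin N)} (hp : Avoids321 p) (hq : Avoids321 q)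
    (hiff : ∀ j, IsLTRMax p j ↔ IsLTRMax q j)
    (hval : ∀ j, IsLTRMax p j → p j = q j) : p = q := by
  have key : ∀ n : ℕ, ∀ hn : n < N, p ⟨n, hn⟩ = q ⟨n, hn⟩ := by
    intro n
    induction n using Nat.strong_induction_on with
    | _ n IH =>
    intro hn
    set j : Fin N := ⟨n, hn⟩ with hjdef
    by_cases hl : IsLTRMax p j
    · exact hval j hl
    · have hlq : ¬ IsLTRMax q j := fun h => hl ((hiff j).2 h)
      have hpq : ∀ i : Fin N, i < j → p i = q i := by
        intro i hij
        have := IH (i : ℕ) hij i.isLt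
        simpa using this
      have h1 : p j ≤ q j := by
        refine min_unused hp hl (q j) (fun i hij he => ?_)
        rw [hpq i hij] at he
        exact (ne_of_lt hij) (q.injective he)
      have h2 : q j ≤ p j := by
        refine min_unused hq hlq (p j) (fun i hij he => ?_)
        rw [← hpq i hij] at he
        exact (ne_of_lt hij) (p.injective he)
      exact le_antisymm h1 h2
  exact Equiv.ext (fun k => by simpa using key (k : ℕ) k.isLt)

lemma ltrData_eq_of (p q : Equiv.Perm (Fin N))
    (hiff : ∀ j, IsLTRMax p j ↔ IsLTRMax q j)
    (hval : ∀ j, IsLTRMax p j → p j = q j) : ltrData p = ltrData q := by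
  ext x
  simp only [ltrData, Set.mem_setOf_eq]
  constructor
  · rintro ⟨j, hj, rfl⟩; exact ⟨j, (hiff j).1 hj, by rw [hval j hj]⟩
  · rintro ⟨j, hj, rfl⟩; exact ⟨j, (hiff j).2 hj, by rw [hval j ((hiff j).2 hj)]⟩

lemma ltr_of_data {p q : Equiv.Perm (Fin N)} (h : ltrData p = ltrData q) (j : Fin N)
    (hj : IsLTRMax p j) : IsLTRMax q j ∧ p j = q j := by
  have hx : ((j : ℕ) + 1, (p j : ℕ) + 1) ∈ ltrData q := h ▸ ⟨j, hj, rfl⟩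
  obtain ⟨j', hj', he⟩ := hx
  have h1 : (j : ℕ) = (j' : ℕ) := by
    have := congrArg Prod.fst he
    simpa using this
  obtain rfl : j' = j := Fin.ext h1.symm
  refine ⟨hj', Fin.ext ?_⟩
  have := congrArg Prod.snd he
  simpa using this

end LTRAux

/-- For each valid set of (position, value) pairs of left-to-right maxima (i.e. one
arising from at least one permutation `p₀` of size `N`), there is exactly one
321-avoiding permutation of size `N` whose left-to-right maxima data is that set. -/
theorem existsUnique_avoids321_with_ltrData (N : ℕ) (p₀ : Equiv.Perm (Fin N)) :
    ∃! p : Equiv.Perm (Fin N), Avoids321 p ∧ ltrData p = ltrData p₀ := by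
  rcases Nat.eq_zero_or_pos N with h0 | hN
  · subst h0
    refine ⟨p₀, ⟨?_, rfl⟩, fun q _ => Equiv.ext (fun i => i.elim0)⟩
    rintro ⟨i, -⟩
    exact i.elim0
  · set P := LTRAux.buildPerm p₀ hN with hPdef
    have hiff : ∀ j, IsLTRMax P j ↔ IsLTRMax p₀ j := LTRAux.ltr_buildPerm_iff p₀ hN
    have hval : ∀ j, IsLTRMax P j → P j = p₀ j :=
      fun j hj => LTRAux.buildPerm_ltr_val p₀ hN ((hiff j).1 hj)
    have hdata : ltrData P = ltrData p₀ := LTRAux.ltrData_eq_of P p₀ hiff hval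
    refine ⟨P, ⟨LTRAux.avoids_buildPerm p₀ hN, hdata⟩, ?_⟩
    rintro q ⟨hq1, hq2⟩
    have hqP : ltrData q = ltrData P := hq2.trans hdata.symm
    refine LTRAux.ext_of_avoids hq1 (LTRAux.avoids_buildPerm p₀ hN) ?_ ?_
    · intro j
      exact ⟨fun h => (LTRAux.ltr_of_data hqP j h).1,
        fun h => (LTRAux.ltr_of_data hqP.symm j h).1⟩
    · intro j hj
      exact (LTRAux.ltr_of_data hqP j hj).2
end

section
/- The numbers T_i(N) of partial Dyck paths from (0,0) to (N-1-i, N-1) satisfy the recurrence T_i(N) = T_{i-1}(N) - T_{i-2}(N-1) for i ≥ 3, with T_1(N) = C_{N-1} and T_2(N) = C_{N-1} - C_{N-2}. -/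
/-- The number of partial Dyck paths from `(0,0)` to `(a,b)`. -/
noncomputable def partialDyckCount (a b : ℕ) : ℕ :=
  Nat.card {w : List Bool // w.length = a + b ∧ w.count false = a ∧ IsPrefixDyck w}

/-- `T_i(N)`: the number of partial Dyck paths from `(0,0)` to `(N-1-i, N-1)`. -/
noncomputable def T (i N : ℕ) : ℕ := partialDyckCount (N - 1 - i) (N - 1)

open List

/-- The set of words counted by `partialDyckCount a b`. -/
private def PD (a b : ℕ) : Set (List Bool) :=
  {w | w.length = a + b ∧ w.count false = a ∧ IsPrefixDyck w}

private lemma pdc_eq_ncard (a b : ℕ) : partialDyckCount a b = (PD a b).ncard := by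
  rw [← Nat.card_coe_set_eq]; rfl

private lemma pd_finite (a b : ℕ) : (PD a b).Finite :=
  Set.Finite.subset (List.finite_length_eq Bool (a + b)) fun w hw => hw.1

private lemma isPrefixDyck_append_singleton {u : List Bool} {x : Bool} :
    IsPrefixDyck (u ++ [x]) ↔
      IsPrefixDyck u ∧ (u ++ [x]).count false ≤ (u ++ [x]).count true := by
  constructor
  · intro h
    refine ⟨fun t => ?_, ?_⟩
    · rcases le_or_gt t u.length with h' | h'
      · have ht := h t
        rwa [take_append, Nat.sub_eq_zero_of_le h', take_zero,
          append_nil] at ht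
      · rw [take_of_length_le (le_of_lt h')]
        have ht := h u.length
        rwa [take_append, Nat.sub_self, take_zero, append_nil,
          take_length] at ht
    · have ht := h (u.length + 1)
      rwa [take_of_length_le (by simp)] at ht
  · rintro ⟨h1, h2⟩ t
    rcases le_or_gt t u.length with h' | h'
    · rw [take_append, Nat.sub_eq_zero_of_le h', take_zero, append_nil]
      exact h1 t
    · rw [take_of_length_le (by simp; omega)]
      exact h2

private lemma pd_union (a b : ℕ) (hab : a ≤ b) :
    PD (a+1) (b+1) =
      (fun u => u ++ [false]) '' PD a (b+1) ∪ (fun u => u ++ [true]) '' PD (a+1) b := by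
  ext w
  constructor
  · rintro ⟨hl, hc, hd⟩
    obtain rfl | ⟨u, x, rfl⟩ := w.eq_nil_or_concat
    · simp at hl
    simp only [List.concat_eq_append] at hl hc hd ⊢
    rw [isPrefixDyck_append_singleton] at hd
    have hlu : u.length + 1 = (a + 1) + (b + 1) := by simpa using hl
    cases x
    · left
      refine ⟨u, ⟨by omega, ?_, hd.1⟩, rfl⟩
      have : u.count false + 1 = a + 1 := by simpa using hc
      omega
    · right
      refine ⟨u, ⟨by omega, ?_, hd.1⟩, rfl⟩
      simpa using hc
  · have key : ∀ (u : List Bool) (x : Bool), u.length = a + b + 1 →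
        (u ++ [x]).count false = a + 1 → IsPrefixDyck u → w = u ++ [x] → w ∈ PD (a+1) (b+1) := by
      rintro u x hlu hcu hdu rfl
      refine ⟨by simp; omega, hcu, isPrefixDyck_append_singleton.mpr ⟨hdu, ?_⟩⟩
      have hft := (u ++ [x]).count_false_add_count_true
      have hl2 : (u ++ [x]).length = a + b + 2 := by simp; omega
      omega
    rintro (⟨u, ⟨h1, h2, h3⟩, rfl⟩ | ⟨u, ⟨h1, h2, h3⟩, rfl⟩)
    · exact key u false (by omega) (by simp [h2]) h3 rfl
    · exact key u true (by omega) (by simp [h2]) h3 rfl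

private lemma pdc_pascal (a b : ℕ) (hab : a ≤ b) :
    partialDyckCount (a+1) (b+1) = partialDyckCount a (b+1) + partialDyckCount (a+1) b := by
  rw [pdc_eq_ncard, pdc_eq_ncard, pdc_eq_ncard, pd_union a b hab,
    Set.ncard_union_eq ?_ ((pd_finite _ _).image _) ((pd_finite _ _).image _),
    Set.ncard_image_of_injective _ (List.append_left_injective _),
    Set.ncard_image_of_injective _ (List.append_left_injective _)]
  rw [Set.disjoint_left]
  rintro w ⟨u, -, rfl⟩ ⟨v, -, hv⟩
  have := congrArg List.getLast? hv
  simp at this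

private lemma pdc_zero (b : ℕ) : partialDyckCount 0 b = 1 := by
  rw [pdc_eq_ncard]
  convert Set.ncard_singleton (List.replicate b true)
  ext w
  simp only [PD, Set.mem_setOf_eq, Set.mem_singleton_iff]
  constructor
  · rintro ⟨h1, h2, h3⟩
    refine List.eq_replicate_iff.mpr ⟨by omega, fun x hx => ?_⟩
    cases x
    · rw [← List.count_pos_iff] at hx; omega
    · rfl
  · rintro rfl
    refine ⟨by simp, by simp [List.count_replicate], fun t => ?_⟩
    show ((List.replicate b true).take t).count false ≤ ((List.replicate b true).take t).count true
    simp [List.take_replicate, List.count_replicate]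

private lemma pdc_eq_zero {a b : ℕ} (h : b < a) : partialDyckCount a b = 0 := by
  rw [pdc_eq_ncard]
  convert Set.ncard_empty (List Bool)
  ext w
  simp only [PD, Set.mem_setOf_eq, Set.mem_empty_iff_false, iff_false, not_and]
  rintro h1 h2 h3
  have ht := h3 w.length
  rw [List.take_length] at ht
  have := w.count_false_add_count_true
  omega

open DyckStep in
private def boolToStep : Bool → DyckStep := fun b => bif b then U else D

open DyckStep in
private def stepToBool : DyckStep → Bool := fun s => match s with | U => true | D => false

private lemma boolToStep_injective : Function.Injective boolToStep := by
  intro a b h; cases a <;> cases b <;> simp_all [boolToStep]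

private lemma stepToBool_injective : Function.Injective stepToBool := by
  intro a b h; cases a <;> cases b <;> simp_all [stepToBool]

open DyckStep in
private lemma pdc_diag (n : ℕ) : partialDyckCount n n = catalan n := by
  rw [← DyckWord.card_dyckWord_semilength_eq_catalan n, ← Nat.card_eq_fintype_card]
  apply Nat.card_congr
  have cU : ∀ w : List Bool, (w.map boolToStep).count U = w.count true := fun w => by
    have := List.count_map_of_injective w boolToStep boolToStep_injective true
    simpa [boolToStep] using this
  have cD : ∀ w : List Bool, (w.map boolToStep).count D = w.count false := fun w => by
    have := List.count_map_of_injective w boolToStep boolToStep_injective false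
    simpa [boolToStep] using this
  have cT : ∀ l : List DyckStep, (l.map stepToBool).count true = l.count U := fun l => by
    have := List.count_map_of_injective l stepToBool stepToBool_injective U
    simpa [stepToBool] using this
  have cF : ∀ l : List DyckStep, (l.map stepToBool).count false = l.count D := fun l => by
    have := List.count_map_of_injective l stepToBool stepToBool_injective D
    simpa [stepToBool] using this
  refine ⟨fun w => ⟨⟨w.1.map boolToStep, ?_, ?_⟩, ?_⟩, fun p => ⟨p.1.toList.map stepToBool, ?_, ?_, ?_⟩, ?_, ?_⟩
  · obtain ⟨h1, h2, h3⟩ := w.2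
    have := w.1.count_false_add_count_true
    rw [cU, cD]; omega
  · intro i
    rw [← List.map_take, cU, cD]
    exact w.2.2.2 i
  · obtain ⟨h1, h2, h3⟩ := w.2
    have := w.1.count_false_add_count_true
    show (w.1.map boolToStep).count U = n
    rw [cU]; omega
  · have := DyckWord.two_mul_semilength_eq_length (p := p.1)
    rw [p.2] at this
    simp; omega
  · rw [cF, ← DyckWord.semilength_eq_count_D, p.2]
  · intro t
    rw [← List.map_take, cF, cT]
    exact p.1.count_D_le_count_U t
  · rintro ⟨w, h1, h2, h3⟩
    ext1
    simp only [List.map_map]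
    have : stepToBool ∘ boolToStep = id := by funext x; cases x <;> rfl
    rw [this, List.map_id]
  · rintro ⟨p, hp⟩
    ext1; ext1
    simp only [List.map_map]
    have : boolToStep ∘ stepToBool = id := by funext x; cases x <;> rfl
    rw [this, List.map_id]

private lemma pdc_succ_diag (n : ℕ) : partialDyckCount n (n+1) = catalan (n+1) := by
  have hp := pdc_pascal n n le_rfl
  have h0 := pdc_eq_zero (show n < n + 1 by omega)
  have hd := pdc_diag (n+1)
  omega

/-- `T_1(N) = C_{N-1}`, `T_2(N) = C_{N-1} - C_{N-2}`, and for `3 ≤ i ≤ N-1`,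
`T_i(N) = T_{i-1}(N) - T_{i-2}(N-1)`. -/
theorem T_recurrence (N : ℕ) :
    (2 ≤ N → T 1 N = catalan (N - 1)) ∧
    (3 ≤ N → T 2 N = catalan (N - 1) - catalan (N - 2)) ∧
    (∀ i : ℕ, 3 ≤ i → i ≤ N - 1 → T i N = T (i - 1) N - T (i - 2) (N - 1)) := by
  refine ⟨?_, ?_, ?_⟩
  · intro hN
    obtain ⟨n, rfl⟩ : ∃ n, N = n + 2 := ⟨N - 2, by omega⟩
    have e : T 1 (n + 2) = partialDyckCount n (n + 1) := by
      unfold T; congr 1 <;> omega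
    have e2 : n + 2 - 1 = n + 1 := by omega
    rw [e, e2, pdc_succ_diag]
  · intro hN
    obtain ⟨n, rfl⟩ : ∃ n, N = n + 3 := ⟨N - 3, by omega⟩
    have e : T 2 (n + 3) = partialDyckCount n (n + 2) := by
      unfold T; congr 1 <;> omega
    have hp : partialDyckCount (n + 1) (n + 2) =
        partialDyckCount n (n + 2) + partialDyckCount (n + 1) (n + 1) :=
      pdc_pascal n (n + 1) (by omega)
    have h1 : partialDyckCount (n + 1) (n + 2) = catalan (n + 2) := pdc_succ_diag (n + 1)
    have h2 := pdc_diag (n + 1)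
    have e2 : n + 3 - 1 = n + 2 := by omega
    have e3 : n + 3 - 2 = n + 1 := by omega
    rw [e, e2, e3]
    omega
  · intro i hi hiN
    obtain ⟨j, rfl⟩ : ∃ j, i = j + 3 := ⟨i - 3, by omega⟩
    obtain ⟨k, rfl⟩ : ∃ k, N = j + 4 + k := ⟨N - (j + 4), by omega⟩
    have e1 : T (j + 3) (j + 4 + k) = partialDyckCount k (j + k + 3) := by
      unfold T; congr 1 <;> omega
    have e2 : T (j + 3 - 1) (j + 4 + k) = partialDyckCount (k + 1) (j + k + 3) := by
      unfold T; congr 1 <;> omega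
    have e3 : T (j + 3 - 2) (j + 4 + k - 1) = partialDyckCount (k + 1) (j + k + 2) := by
      unfold T; congr 1 <;> omega
    have hp : partialDyckCount (k + 1) (j + k + 3) =
        partialDyckCount k (j + k + 3) + partialDyckCount (k + 1) (j + k + 2) :=
      pdc_pascal k (j + k + 2) (by omega)
    rw [e1, e2, e3]
    omega
end
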